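/- For every gST-automaton 𝒜 without silent transitions there exists a gST-automaton 𝒜' with L(𝒜') = L(𝒜) that satisfies conditions (a)–(d): (a) no transition enters an initial state; (b) no transition leaves an accepting state; (c) every transition labelled ⟨S,U,T⟩ with T = U has its target in the accepting states; (d) every transition labelled ⟨S,U,T⟩ with S = U has its source in the initial states. -/

import Mathlib

open scoped Classical

namespace HDA

/-! ### Ipomsets over a fixed alphabet -/

structure PreIpomset (σ : Type) : Type 1 where
  carrier : Type
  fin : Finite carrier
  lt : carrier → carrier → Prop
  evord : carrier → carrier → Prop
  S : Set carrier
  T : Set carrier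
  lab : carrier → σ

namespace PreIpomset

variable {σ : Type}

/-- The precedence order is empty. -/
def Discrete (P : PreIpomset σ) : Prop := ∀ x y, ¬ P.lt x y

/-- Validity: `lt` is a strict partial order which is an interval order, `evord` is acyclic,
for distinct events exactly one of the four relations holds, sources are minimal and
targets are maximal.  (All ipomsets considered are interval.) -/
structure IsIpomset (P : PreIpomset σ) : Prop where
  lt_trans : ∀ x y z, P.lt x y → P.lt y z → P.lt x z
  lt_irrefl : ∀ x, ¬ P.lt x x
  evord_acyclic : ∀ x, ¬ Relation.TransGen P.evord x x
  total : ∀ x y : P.carrier, x ≠ y → P.lt x y ∨ P.lt y x ∨ P.evord x y ∨ P.evord y x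
  lt_not_evord : ∀ x y, P.lt x y → ¬ P.evord x y ∧ ¬ P.evord y x
  src_min : ∀ x ∈ P.S, ∀ y, ¬ P.lt y x
  tgt_max : ∀ x ∈ P.T, ∀ y, ¬ P.lt x y
  interval : ∀ w x y z, P.lt w x → P.lt y z → P.lt w z ∨ P.lt y x

/-- A conclist: a discrete ipomset with empty interfaces. -/
def IsConclist (P : PreIpomset σ) : Prop :=
  P.IsIpomset ∧ P.Discrete ∧ P.S = ∅ ∧ P.T = ∅

/-- A starter `⟨U∖A,U,U⟩`. -/
def IsStarter (P : PreIpomset σ) : Prop := P.IsIpomset ∧ P.Discrete ∧ P.T = Set.univ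

/-- A terminator `⟨U,U,U∖B⟩`. -/
def IsTerminator (P : PreIpomset σ) : Prop := P.IsIpomset ∧ P.Discrete ∧ P.S = Set.univ

/-- An identity `⟨U,U,U⟩`. -/
def IsIdentityIpomset (P : PreIpomset σ) : Prop :=
  P.IsIpomset ∧ P.Discrete ∧ P.S = Set.univ ∧ P.T = Set.univ

def IsProperStarter (P : PreIpomset σ) : Prop := P.IsStarter ∧ P.S ≠ Set.univ

def IsProperTerminator (P : PreIpomset σ) : Prop := P.IsTerminator ∧ P.T ≠ Set.univ

/-- Isomorphism of (pre)ipomsets. -/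
def Iso (P Q : PreIpomset σ) : Prop :=
  ∃ f : P.carrier ≃ Q.carrier,
    (∀ x y, P.lt x y ↔ Q.lt (f x) (f y)) ∧
    (∀ x y, P.evord x y ↔ Q.evord (f x) (f y)) ∧
    (∀ x, x ∈ P.S ↔ f x ∈ Q.S) ∧
    (∀ x, x ∈ P.T ↔ f x ∈ Q.T) ∧
    (∀ x, Q.lab (f x) = P.lab x)

/-- Restriction to a subset of events, with empty interfaces. -/
def restrict (P : PreIpomset σ) (K : Set P.carrier) : PreIpomset σ where
  carrier := {x : P.carrier // x ∈ K}
  fin := by haveI := P.fin; exact inferInstance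
  lt := fun x y => P.lt x.val y.val
  evord := fun x y => P.evord x.val y.val
  S := ∅
  T := ∅
  lab := fun x => P.lab x.val

/-- The source interface of `P` as a conclist. -/
def srcIface (P : PreIpomset σ) : PreIpomset σ := P.restrict P.S

/-- The target interface of `P` as a conclist. -/
def tgtIface (P : PreIpomset σ) : PreIpomset σ := P.restrict P.T

/-- The underlying conclist (forget interfaces). -/
def conclistOf (P : PreIpomset σ) : PreIpomset σ := { P with S := ∅, T := ∅ }

/-- The identity ipomset `⟨U,U,U⟩` on the conclist underlying `P`. -/
def idOf (P : PreIpomset σ) : PreIpomset σ := { P with S := Set.univ, T := Set.univ }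

/-- The discrete ipomset `⟨S,U,T⟩` on the conclist underlying `P`. -/
def withIfaces (P : PreIpomset σ) (S T : Set P.carrier) : PreIpomset σ :=
  { P with S := S, T := T }

/-- The starter `⟨U∖A,U,U⟩` on the conclist underlying `P`. -/
def starter (P : PreIpomset σ) (A : Set P.carrier) : PreIpomset σ :=
  { P with S := Aᶜ, T := Set.univ }

/-- The terminator `⟨U,U,U∖B⟩` on the conclist underlying `P`. -/
def terminator (P : PreIpomset σ) (B : Set P.carrier) : PreIpomset σ :=
  { P with S := Set.univ, T := Bᶜ }

/-- A matching `T_P ≅ S_Q`, i.e. an isomorphism of interface conclists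
along which `P` and `Q` may be glued. -/
structure Matching (P Q : PreIpomset σ) : Type where
  g : {x : P.carrier // x ∈ P.T} ≃ {y : Q.carrier // y ∈ Q.S}
  evord_iff : ∀ x y, P.evord x.val y.val ↔ Q.evord (g x).val (g y).val
  lab_eq : ∀ x, Q.lab (g x).val = P.lab x.val

def gluePOf (P Q : PreIpomset σ) :
    P.carrier ⊕ {y : Q.carrier // y ∉ Q.S} → Option P.carrier
  | Sum.inl x => some x
  | Sum.inr _ => none

noncomputable def glueQOf (P Q : PreIpomset σ) (m : Matching P Q) :
    P.carrier ⊕ {y : Q.carrier // y ∉ Q.S} → Option Q.carrier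
  | Sum.inl x => if h : x ∈ P.T then some (m.g ⟨x, h⟩).val else none
  | Sum.inr y => some y.val

/-- The gluing `P * Q` along a matching `T_P ≅ S_Q`. -/
noncomputable def glue (P Q : PreIpomset σ) (m : Matching P Q) : PreIpomset σ where
  carrier := P.carrier ⊕ {y : Q.carrier // y ∉ Q.S}
  fin := by haveI := P.fin; haveI := Q.fin; exact inferInstance
  lt := fun u v =>
    (∃ x x', gluePOf P Q u = some x ∧ gluePOf P Q v = some x' ∧ P.lt x x') ∨
    (∃ y y', glueQOf P Q m u = some y ∧ glueQOf P Q m v = some y' ∧ Q.lt y y') ∨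
    ((∃ x, gluePOf P Q u = some x ∧ x ∉ P.T) ∧
     (∃ y, glueQOf P Q m v = some y ∧ y ∉ Q.S))
  evord := fun u v =>
    (∃ x x', gluePOf P Q u = some x ∧ gluePOf P Q v = some x' ∧ P.evord x x') ∨
    (∃ y y', glueQOf P Q m u = some y ∧ glueQOf P Q m v = some y' ∧ Q.evord y y')
  S := {u | ∃ x, gluePOf P Q u = some x ∧ x ∈ P.S}
  T := {u | ∃ y, glueQOf P Q m u = some y ∧ y ∈ Q.T}
  lab := Sum.elim P.lab fun y => Q.lab y.val

/-- `R` is (isomorphic to) the gluing `P * Q`; in particular `T_P ≅ S_Q`. -/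
def GlueRel (P Q R : PreIpomset σ) : Prop :=
  ∃ m : Matching P Q, Iso (glue P Q m) R

/-- A choice of gluing (used when a matching is known to exist). -/
noncomputable def glueChoice (P Q : PreIpomset σ) : PreIpomset σ :=
  if h : Nonempty (Matching P Q) then glue P Q h.some else P

/-- `GluesTo l R`: `R` is the gluing of the nonempty list `l` of ipomsets. -/
inductive GluesTo : List (PreIpomset σ) → PreIpomset σ → Prop
  | single {P R : PreIpomset σ} : Iso P R → GluesTo [P] R
  | cons {P : PreIpomset σ} {l : List (PreIpomset σ)} {R' R : PreIpomset σ} :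
      GluesTo l R' → GlueRel P R' R → GluesTo (P :: l) R

/-- Proper starters and proper terminators alternate. -/
def Alternating (l : List (PreIpomset σ)) : Prop :=
  l.Chain' fun P Q => (IsProperStarter P ∧ IsProperTerminator Q) ∨
    (IsProperTerminator P ∧ IsProperStarter Q)

/-- `l` is a sparse step decomposition of `R`: either a single identity, or an
alternating sequence of proper starters and proper terminators gluing to `R`. -/
def IsSparseDecomp (l : List (PreIpomset σ)) (R : PreIpomset σ) : Prop :=
  GluesTo l R ∧
  ((∃ I, l = [I] ∧ IsIdentityIpomset I) ∨
   ((∀ P ∈ l, IsProperStarter P ∨ IsProperTerminator P) ∧ Alternating l))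

/-- `P ∈ iPoms^q`: the sparse step decomposition of `P` does not end with a
proper starter (i.e. it ends with a terminator or is a single identity). -/
def InQ (P : PreIpomset σ) : Prop :=
  ∃ l, IsSparseDecomp l P ∧ ∀ Q, l.getLast? = some Q → ¬ IsProperStarter Q

end PreIpomset

open PreIpomset

variable {σ : Type}

/-! ### Languages and rational operations -/

def glueLang (L M : Set (PreIpomset σ)) : Set (PreIpomset σ) :=
  {R | ∃ P ∈ L, ∃ Q ∈ M, GlueRel P Q R}

def powLang (L : Set (PreIpomset σ)) : ℕ → Set (PreIpomset σ)
  | 0 => L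
  | n + 1 => glueLang L (powLang L n)

/-- `L⁺ = ⋃_{n ≥ 1} Lⁿ`. -/
def plusLang (L : Set (PreIpomset σ)) : Set (PreIpomset σ) := ⋃ n, powLang L n

/-- Rational languages of (interval) ipomsets: generated from `∅` and singletons
(up to isomorphism) of starters and terminators by union, gluing composition and plus. -/
inductive Rational : Set (PreIpomset σ) → Prop
  | empty : Rational ∅
  | single {P : PreIpomset σ} : IsStarter P ∨ IsTerminator P → Rational {Q | Iso Q P}
  | union {L M : Set (PreIpomset σ)} : Rational L → Rational M → Rational (L ∪ M)
  | concat {L M : Set (PreIpomset σ)} : Rational L → Rational M → Rational (glueLang L M)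
  | plus {L : Set (PreIpomset σ)} : Rational L → Rational (plusLang L)

/-! ### P-automata -/

structure PAutomaton (σ : Type) : Type 1 where
  Q : Type
  E : Type
  src : E → Q
  tgt : E → Q
  lab : E → PreIpomset σ
  mu : Q → PreIpomset σ
  start : Set Q
  accept : Set Q

namespace PAutomaton

variable {σ : Type}

/-- The axioms of a P-automaton: finite sets of states and transitions, states
labelled by conclists, transitions by interval ipomsets, with
`μ(s(e)) ≅ S_{λ(e)}` and `μ(t(e)) ≅ T_{λ(e)}`. -/
def IsPA (A : PAutomaton σ) : Prop :=
  Finite A.Q ∧ Finite A.E ∧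
  (∀ q, (A.mu q).IsConclist) ∧ (∀ e, (A.lab e).IsIpomset) ∧
  (∀ e, Iso (A.lab e).srcIface (A.mu (A.src e))) ∧
  (∀ e, Iso (A.lab e).tgtIface (A.mu (A.tgt e)))

/-- ST-automaton: every label is a starter or a terminator. -/
def IsST (A : PAutomaton σ) : Prop := ∀ e, IsStarter (A.lab e) ∨ IsTerminator (A.lab e)

/-- gST-automaton: every label is discrete. -/
def IsGST (A : PAutomaton σ) : Prop := ∀ e, (A.lab e).Discrete

/-- No transition is labelled by an identity. -/
def NoSilent (A : PAutomaton σ) : Prop := ∀ e, ¬ IsIdentityIpomset (A.lab e)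

/-- A reduced gST-automaton: no silent transitions and conditions (a)–(f). -/
def Reduced (A : PAutomaton σ) : Prop :=
  NoSilent A ∧
  (∀ e, A.tgt e ∉ A.start) ∧
  (∀ e, A.src e ∉ A.accept) ∧
  (∀ e, (A.lab e).T = Set.univ → A.tgt e ∈ A.accept) ∧
  (∀ e, (A.lab e).S = Set.univ → A.src e ∈ A.start) ∧
  (∀ e e', A.src e ∈ A.start → A.src e' = A.src e → e' = e) ∧
  (∀ e e', A.tgt e ∈ A.accept → A.tgt e' = A.tgt e → e' = e)

/-- Paths in a P-automaton, from a state to a state. -/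
inductive Path (A : PAutomaton σ) : A.Q → A.Q → Type
  | nil (q : A.Q) : Path A q q
  | cons (e : A.E) {r : A.Q} (rest : Path A (A.tgt e) r) : Path A (A.src e) r

/-- The (interval) ipomset recognized by a path, up to isomorphism:
the gluing of the labels of its transitions (an identity for a constant path). -/
inductive Rec {A : PAutomaton σ} : ∀ {p r : A.Q}, Path A p r → PreIpomset σ → Prop
  | nil (q : A.Q) (R : PreIpomset σ) : Iso (A.mu q).idOf R → Rec (Path.nil q) R
  | cons (e : A.E) {r : A.Q} (rest : Path A (A.tgt e) r) {R' R : PreIpomset σ} :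
      Rec rest R' → GlueRel (A.lab e) R' R → Rec (Path.cons e rest) R

/-- The language of a P-automaton. -/
def lang (A : PAutomaton σ) : Set (PreIpomset σ) :=
  {R | ∃ p r, ∃ α : Path A p r, p ∈ A.start ∧ r ∈ A.accept ∧ Rec α R}

/-- Dimension of a transition. -/
noncomputable def dim (A : PAutomaton σ) (e : A.E) : ℕ := Nat.card (A.lab e).carrier

/-- Number of bad starter transitions of dimension `n`. -/
noncomputable def bst (A : PAutomaton σ) (n : ℕ) : ℕ :=
  Nat.card {e : A.E // IsProperStarter (A.lab e) ∧ A.tgt e ∉ A.accept ∧ A.dim e = n}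

/-- Number of bad terminator transitions of dimension `n`. -/
noncomputable def btt (A : PAutomaton σ) (n : ℕ) : ℕ :=
  Nat.card {e : A.E // IsProperTerminator (A.lab e) ∧ A.src e ∉ A.start ∧ A.dim e = n}

/-- The automaton `𝒜_c`: remove the starter transition `c`; for every transition `e`
out of `t(c)` add a transition `e*` from `s(c)` to `t(e)` labelled `λ(c) * λ(e)`. -/
noncomputable def Ac (A : PAutomaton σ) (c : A.E) : PAutomaton σ where
  Q := A.Q
  E := {e : A.E // e ≠ c} ⊕ {e : A.E // A.src e = A.tgt c}
  src := Sum.elim (fun e => A.src e.val) fun _ => A.src c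
  tgt := Sum.elim (fun e => A.tgt e.val) fun e => A.tgt e.val
  lab := Sum.elim (fun e => A.lab e.val) fun e => glueChoice (A.lab c) (A.lab e.val)
  mu := A.mu
  start := A.start
  accept := A.accept

/-- Disjoint union of two P-automata. -/
def sumAut (A B : PAutomaton σ) : PAutomaton σ where
  Q := A.Q ⊕ B.Q
  E := A.E ⊕ B.E
  src := Sum.elim (Sum.inl ∘ A.src) (Sum.inr ∘ B.src)
  tgt := Sum.elim (Sum.inl ∘ A.tgt) (Sum.inr ∘ B.tgt)
  lab := Sum.elim A.lab B.lab
  mu := Sum.elim A.mu B.mu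
  start := Sum.inl '' A.start ∪ Sum.inr '' B.start
  accept := Sum.inl '' A.accept ∪ Sum.inr '' B.accept

/-- Concatenation `𝒜 * ℬ`: disjoint union together with identity-labelled transitions
from accepting states of `𝒜` to initial states of `ℬ` with isomorphic state labels. -/
def concatAut (A B : PAutomaton σ) : PAutomaton σ where
  Q := A.Q ⊕ B.Q
  E := A.E ⊕ B.E ⊕
    {pq : A.Q × B.Q // pq.1 ∈ A.accept ∧ pq.2 ∈ B.start ∧ Iso (A.mu pq.1) (B.mu pq.2)}
  src := Sum.elim (Sum.inl ∘ A.src)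
    (Sum.elim (Sum.inr ∘ B.src) fun pq => Sum.inl pq.val.1)
  tgt := Sum.elim (Sum.inl ∘ A.tgt)
    (Sum.elim (Sum.inr ∘ B.tgt) fun pq => Sum.inr pq.val.2)
  lab := Sum.elim A.lab (Sum.elim B.lab fun pq => (A.mu pq.val.1).idOf)
  mu := Sum.elim A.mu B.mu
  start := Sum.inl '' A.start
  accept := Sum.inr '' B.accept

/-- Kleene plus `𝒜⁺`: add identity-labelled transitions from accepting states
to initial states with isomorphic state labels. -/
def plusAut (A : PAutomaton σ) : PAutomaton σ where
  Q := A.Q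
  E := A.E ⊕
    {pq : A.Q × A.Q // pq.1 ∈ A.accept ∧ pq.2 ∈ A.start ∧ Iso (A.mu pq.1) (A.mu pq.2)}
  src := Sum.elim A.src fun pq => pq.val.1
  tgt := Sum.elim A.tgt fun pq => pq.val.2
  lab := Sum.elim A.lab fun pq => (A.mu pq.val.1).idOf
  mu := A.mu
  start := A.start
  accept := A.accept

end PAutomaton

/-! ### Partial HDAs -/

/-- `g` exhibits `V` as the sub-conclist of `U` obtained by removing the events in `K`. -/
def IsFaceEmbed (U : PreIpomset σ) (K : Set U.carrier) (V : PreIpomset σ)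
    (g : V.carrier → U.carrier) : Prop :=
  Function.Injective g ∧ Set.range g = Kᶜ ∧
  (∀ u v, V.evord u v ↔ U.evord (g u) (g v)) ∧
  (∀ u, U.lab (g u) = V.lab u)

/-- The data of a partial higher-dimensional automaton: cells labelled by conclists,
partial face maps, initial and accepting cells. -/
structure PrePHDA (σ : Type) : Type 1 where
  cell : Type
  ev : cell → PreIpomset σ
  face : (x : cell) → Set (ev x).carrier → Set (ev x).carrier → Option cell
  start : Set cell
  accept : Set cell

namespace PrePHDA

variable {σ : Type}

/-- The lax precubical identity: whenever `δ_{A,B}(x)` and `δ_{C,D}(δ_{A,B}(x))` are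
defined, `δ_{A∪C,B∪D}(x)` is defined and equal to the composite. -/
def IsLax (X : PrePHDA σ) : Prop :=
  ∀ x (A B : Set (X.ev x).carrier) y, X.face x A B = some y →
    ∀ g, IsFaceEmbed (X.ev x) (A ∪ B) (X.ev y) g →
      ∀ (C D : Set (X.ev y).carrier) z, X.face y C D = some z →
        X.face x (A ∪ g '' C) (B ∪ g '' D) = some z

/-- The axioms of a partial HDA. -/
def IsPHDA (X : PrePHDA σ) : Prop :=
  (∀ x, (X.ev x).IsConclist) ∧
  (∀ x, X.face x ∅ ∅ = some x) ∧
  (∀ x A B y, X.face x A B = some y →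
    Disjoint A B ∧ ∃ g, IsFaceEmbed (X.ev x) (A ∪ B) (X.ev y) g) ∧
  IsLax X

/-- Strictness: `δ_{C,D} ∘ δ_{A,B} = δ_{A∪C,B∪D}` as partial functions. -/
def IsStrict (X : PrePHDA σ) : Prop :=
  IsPHDA X ∧
  (∀ x (A B : Set (X.ev x).carrier) y, X.face x A B = some y →
    ∀ g, IsFaceEmbed (X.ev x) (A ∪ B) (X.ev y) g →
      ∀ C D : Set (X.ev y).carrier,
        X.face x (A ∪ g '' C) (B ∪ g '' D) = X.face y C D) ∧
  (∀ x (A B C D : Set (X.ev x).carrier),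
    Disjoint (A ∪ C) (B ∪ D) → C ∪ D ⊆ (A ∪ B)ᶜ →
    X.face x A B = none → X.face x (A ∪ C) (B ∪ D) = none)

/-- Paths in a partial HDA: sequences of upsteps and downsteps. -/
inductive Path (X : PrePHDA σ) : X.cell → X.cell → Type
  | nil (x : X.cell) : Path X x x
  | up {x z : X.cell} (y : X.cell) (A : Set (X.ev y).carrier)
      (h : X.face y A ∅ = some x) (rest : Path X y z) : Path X x z
  | down {z w : X.cell} (y : X.cell) (B : Set (X.ev y).carrier)
      (h : X.face y ∅ B = some z) (rest : Path X z w) : Path X y w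

/-- Directions of the steps of a path (`true` = upstep). -/
def Path.dirs {X : PrePHDA σ} : {x z : X.cell} → Path X x z → List Bool
  | _, _, .nil _ => []
  | _, _, .up _ _ _ rest => true :: rest.dirs
  | _, _, .down _ _ _ rest => false :: rest.dirs

/-- A path is sparse if upsteps and downsteps alternate. -/
def Path.Sparse {X : PrePHDA σ} {x z : X.cell} (α : Path X x z) : Prop :=
  α.dirs.Chain' (· ≠ ·)

/-- Concatenation of paths. -/
def Path.comp {X : PrePHDA σ} : {x y z : X.cell} → Path X x y → Path X y z → Path X x z
  | _, _, _, .nil _, β => β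
  | _, _, _, .up y A h rest, β => .up y A h (rest.comp β)
  | _, _, _, .down y B h rest, β => .down y B h (rest.comp β)

/-- The ipomset recognized by a path, up to isomorphism: the gluing of the starters
and terminators of its steps (an identity for a constant path). -/
inductive Rec {X : PrePHDA σ} : ∀ {x z : X.cell}, Path X x z → PreIpomset σ → Prop
  | nil (x : X.cell) (R : PreIpomset σ) :
      Iso (X.ev x).idOf R → Rec (Path.nil x) R
  | up {x z : X.cell} (y : X.cell) (A : Set (X.ev y).carrier)
      (h : X.face y A ∅ = some x) (rest : Path X y z) {R' R : PreIpomset σ} :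
      Rec rest R' → GlueRel ((X.ev y).starter A) R' R → Rec (Path.up y A h rest) R
  | down {z w : X.cell} (y : X.cell) (B : Set (X.ev y).carrier)
      (h : X.face y ∅ B = some z) (rest : Path X z w) {R' R : PreIpomset σ} :
      Rec rest R' → GlueRel ((X.ev y).terminator B) R' R → Rec (Path.down y B h rest) R

/-- The language of a partial HDA. -/
def lang (X : PrePHDA σ) : Set (PreIpomset σ) :=
  {R | ∃ x z, ∃ α : Path X x z, x ∈ X.start ∧ z ∈ X.accept ∧ Rec α R}

/-- `X(K,P)`: cells reachable from `K` by a path recognizing `P`. -/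
def track (X : PrePHDA σ) (K : Set X.cell) (P : PreIpomset σ) : Set X.cell :=
  {x | ∃ s, ∃ α : Path X s x, s ∈ K ∧ Rec α P}

/-- Deterministic partial HDA: at most one initial cell per conclist, and lower
face maps are "injective" in the appropriate sense. -/
def Deterministic (X : PrePHDA σ) : Prop :=
  (∀ x y, x ∈ X.start → y ∈ X.start → Iso (X.ev x) (X.ev y) → x = y) ∧
  (∀ (y y' : X.cell) (A : Set (X.ev y).carrier) (A' : Set (X.ev y').carrier)
      (x : X.cell), X.face y A ∅ = some x → X.face y' A' ∅ = some x →
    (∃ f : (X.ev y).carrier ≃ (X.ev y').carrier,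
      (∀ u v, (X.ev y).evord u v ↔ (X.ev y').evord (f u) (f v)) ∧
      (∀ u, (X.ev y').lab (f u) = (X.ev y).lab u) ∧ f '' A = A') → y = y')

end PrePHDA

/-! ### Relational HDAs -/

/-- The data of a relational HDA: face relations instead of partial face maps. -/
structure PreRHDA (σ : Type) : Type 1 where
  cell : Type
  ev : cell → PreIpomset σ
  face : (x : cell) → Set (ev x).carrier → Set (ev x).carrier → Set cell
  start : Set cell
  accept : Set cell

namespace PreRHDA

variable {σ : Type}

/-- The axioms of a relational HDA, with the lax precubical identity
`δ_{C,D} ∘ δ_{A,B} ⊆ δ_{A∪C,B∪D}`. -/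
def IsRHDA (X : PreRHDA σ) : Prop :=
  (∀ x, (X.ev x).IsConclist) ∧
  (∀ x, X.face x ∅ ∅ = {x}) ∧
  (∀ x A B y, y ∈ X.face x A B →
    Disjoint A B ∧ ∃ g, IsFaceEmbed (X.ev x) (A ∪ B) (X.ev y) g) ∧
  (∀ x (A B : Set (X.ev x).carrier) y, y ∈ X.face x A B →
    ∀ g, IsFaceEmbed (X.ev x) (A ∪ B) (X.ev y) g →
      ∀ (C D : Set (X.ev y).carrier) z, z ∈ X.face y C D →
        z ∈ X.face x (A ∪ g '' C) (B ∪ g '' D))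

/-- Paths in a relational HDA. -/
inductive Path (X : PreRHDA σ) : X.cell → X.cell → Type 1
  | nil (x : X.cell) : Path X x x
  | up {x z : X.cell} (y : X.cell) (A : Set (X.ev y).carrier)
      (h : x ∈ X.face y A ∅) (rest : Path X y z) : Path X x z
  | down {z w : X.cell} (y : X.cell) (B : Set (X.ev y).carrier)
      (h : z ∈ X.face y ∅ B) (rest : Path X z w) : Path X y w

/-- The ipomset recognized by a path in a relational HDA. -/
inductive Rec {X : PreRHDA σ} : ∀ {x z : X.cell}, Path X x z → PreIpomset σ → Prop
  | nil (x : X.cell) (R : PreIpomset σ) :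
      Iso (X.ev x).idOf R → Rec (Path.nil x) R
  | up {x z : X.cell} (y : X.cell) (A : Set (X.ev y).carrier)
      (h : x ∈ X.face y A ∅) (rest : Path X y z) {R' R : PreIpomset σ} :
      Rec rest R' → GlueRel ((X.ev y).starter A) R' R → Rec (Path.up y A h rest) R
  | down {z w : X.cell} (y : X.cell) (B : Set (X.ev y).carrier)
      (h : z ∈ X.face y ∅ B) (rest : Path X z w) {R' R : PreIpomset σ} :
      Rec rest R' → GlueRel ((X.ev y).terminator B) R' R → Rec (Path.down y B h rest) R

/-- The language of a relational HDA. -/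
def lang (X : PreRHDA σ) : Set (PreIpomset σ) :=
  {R | ∃ x z, ∃ α : Path X x z, x ∈ X.start ∧ z ∈ X.accept ∧ Rec α R}

/-- The ST-automaton `ST(X)` of a relational HDA `X`: states are cells, transitions
mimic the starting and terminating of events. -/
def stAut (X : PreRHDA σ) : PAutomaton σ where
  Q := X.cell
  E := (Σ q : X.cell, Σ A : Set (X.ev q).carrier, {p : X.cell // p ∈ X.face q A ∅}) ⊕
       (Σ q : X.cell, Σ B : Set (X.ev q).carrier, {r : X.cell // r ∈ X.face q ∅ B})
  src := Sum.elim (fun t => t.2.2.val) fun t => t.1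
  tgt := Sum.elim (fun t => t.1) fun t => t.2.2.val
  lab := Sum.elim (fun t => (X.ev t.1).starter t.2.1) fun t => (X.ev t.1).terminator t.2.1
  mu := X.ev
  start := X.start
  accept := X.accept

end PreRHDA

/-! ### The partial HDA of a reduced gST-automaton -/

open PAutomaton

/-- The cell representing a state `q` in `X(𝒜)`: `q` is merged with a terminator
transition out of it or a starter transition into it, if such exists. -/
noncomputable def cellOfState (A : PAutomaton σ) (q : A.Q) : A.E ⊕ A.Q :=
  if h : ∃ e, IsTerminator (A.lab e) ∧ A.src e = q then Sum.inl h.choose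
  else if h' : ∃ e, IsStarter (A.lab e) ∧ A.tgt e = q then Sum.inl h'.choose
  else Sum.inr q

/-- `X(𝒜)`: cells are `(Q ⊔ E)/∼`, with the only defined (nontrivial) face maps
`δ⁰_{U∖S}([e]) = [s(e)]` and `δ¹_{U∖T}([e]) = [t(e)]` for `λ(e) = ⟨S,U,T⟩`. -/
noncomputable def XofA (A : PAutomaton σ) : PrePHDA σ where
  cell := A.E ⊕ A.Q
  ev := Sum.elim (fun e => (A.lab e).conclistOf) A.mu
  face := fun x =>
    match x with
    | Sum.inl e => fun As Bs =>
        if As = ∅ ∧ Bs = ∅ then some (Sum.inl e)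
        else if As = (A.lab e).Sᶜ ∧ Bs = ∅ then some (cellOfState A (A.src e))
        else if As = ∅ ∧ Bs = (A.lab e).Tᶜ then some (cellOfState A (A.tgt e))
        else none
    | Sum.inr q => fun As Bs =>
        if As = ∅ ∧ Bs = ∅ then some (Sum.inr q) else none
  start := cellOfState A '' A.start
  accept := cellOfState A '' A.accept

end HDA

namespace HDA

namespace PreIpomset
variable {σ : Type}

theorem Iso.rfl {P : PreIpomset σ} : Iso P P :=
  ⟨Equiv.refl _, fun _ _ => Iff.rfl, fun _ _ => Iff.rfl, fun _ => Iff.rfl, fun _ => Iff.rfl,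
    fun _ => Eq.refl _⟩

theorem Iso.symm {P Q : PreIpomset σ} (h : Iso P Q) : Iso Q P := by
  obtain ⟨f, h1, h2, h3, h4, h5⟩ := h
  refine ⟨f.symm, fun x y => ?_, fun x y => ?_, fun x => ?_, fun x => ?_, fun x => ?_⟩
  · rw [h1]; simp
  · rw [h2]; simp
  · rw [h3]; simp
  · rw [h4]; simp
  · rw [← h5]; simp

theorem Iso.trans {P Q R : PreIpomset σ} (h : Iso P Q) (h' : Iso Q R) : Iso P R := by
  obtain ⟨f, h1, h2, h3, h4, h5⟩ := h
  obtain ⟨g, g1, g2, g3, g4, g5⟩ := h'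
  exact ⟨f.trans g, fun x y => (h1 x y).trans (g1 _ _), fun x y => (h2 x y).trans (g2 _ _),
    fun x => (h3 x).trans (g3 _), fun x => (h4 x).trans (g4 _),
    fun x => (g5 _).trans (h5 _)⟩

theorem GlueRel.iso_right {P Q R R' : PreIpomset σ} (h : GlueRel P Q R) (h' : Iso R R') :
    GlueRel P Q R' := by
  obtain ⟨m, hm⟩ := h
  exact ⟨m, hm.trans h'⟩

@[simp] theorem withIfaces_self (P : PreIpomset σ) : P.withIfaces P.S P.T = P := rfl

-- test glue unfolding
example (P Q : PreIpomset σ) (m : Matching P Q) (x : P.carrier) :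
    gluePOf P Q (Sum.inl x) = some x := rfl
example (P Q : PreIpomset σ) (m : Matching P Q) (x : P.carrier) (h : x ∈ P.T) :
    glueQOf P Q m (Sum.inl x) = some (m.g ⟨x, h⟩).val := by
  simp [glueQOf, h]
example (P Q : PreIpomset σ) (m : Matching P Q) (y : {y : Q.carrier // y ∉ Q.S}) :
    glueQOf P Q m (Sum.inr y) = some y.val := rfl


theorem equiv_unique_of_rel {α β : Type} [Finite α] (r : α → α → Prop) (s : β → β → Prop)
    (hacy : ∀ x, ¬ Relation.TransGen r x x)
    (htot : ∀ x y, x ≠ y → r x y ∨ r y x)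
    (g₁ g₂ : α ≃ β)
    (h₁ : ∀ x y, r x y ↔ s (g₁ x) (g₁ y))
    (h₂ : ∀ x y, r x y ↔ s (g₂ x) (g₂ y)) : g₁ = g₂ := by
  have rtrans : ∀ x y z, r x y → r y z → r x z := by
    intro x y z hxy hyz
    by_cases hxz : x = z
    · subst hxz
      exact absurd (Relation.TransGen.head hxy (Relation.TransGen.single hyz)) (hacy x)
    · rcases htot x z hxz with h | h
      · exact h
      · exact absurd (Relation.TransGen.head hxy (Relation.TransGen.head hyz
          (Relation.TransGen.single h))) (hacy x)
  have rirr : ∀ x, ¬ r x x := fun x h => hacy x (Relation.TransGen.single h)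
  haveI : IsTrans α r := ⟨rtrans⟩
  haveI : IsIrrefl α r := ⟨rirr⟩
  have wf : WellFounded r := Finite.wellFounded_of_trans_of_irrefl r
  set e : α ≃ α := g₁.trans g₂.symm with he
  have key : ∀ x y, r (e x) (e y) ↔ r x y := by
    intro x y
    have : s (g₂ (e x)) (g₂ (e y)) ↔ s (g₁ x) (g₁ y) := by
      simp [he]
    rw [← h₂ (e x) (e y)] at this
    rw [this, ← h₁]
  have hfix : ∀ x, e x = x := by
    intro x
    induction x using WellFounded.induction wf with
    | _ x IH =>
      by_contra hne
      rcases htot (e x) x hne with h | h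
      · have h2 := IH (e x) h
        exact hne (e.injective h2)
      · have hyx : r (e (e.symm x)) (e x) := by rwa [Equiv.apply_symm_apply]
        have := (key _ _).mp hyx
        have h3 := IH (e.symm x) this
        rw [Equiv.apply_symm_apply] at h3
        apply hne
        conv_lhs => rw [h3]
        exact Equiv.apply_symm_apply e x
  apply Equiv.ext
  intro x
  have := hfix x
  simp only [he, Equiv.trans_apply] at this
  calc g₁ x = g₂ (g₂.symm (g₁ x)) := by rw [Equiv.apply_symm_apply]
  _ = g₂ x := by rw [this]

/-- The source interface of `P`, transported through a matching into `Q`. -/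
def SddL {P Q : PreIpomset σ} (m : Matching P Q) : Set Q.carrier :=
  {y | ∃ h : y ∈ Q.S, ((m.g.symm ⟨y, h⟩) : {x // x ∈ P.T}).val ∈ P.S}

/-- The target interface of `Q`, pulled back through a matching into `P`. -/
def TddR {P Q : PreIpomset σ} (m : Matching P Q) : Set P.carrier :=
  {x | ∃ h : x ∈ P.T, ((m.g ⟨x, h⟩) : {y // y ∈ Q.S}).val ∈ Q.T}

theorem mem_univ_T {P : PreIpomset σ} (hT : P.T = Set.univ) (x : P.carrier) : x ∈ P.T :=
  hT.symm ▸ Set.mem_univ x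

theorem gluePOf_inl {P Q : PreIpomset σ} (x : P.carrier) :
    gluePOf P Q (Sum.inl x) = some x := rfl

theorem gluePOf_eq_some {P Q : PreIpomset σ} {u} {a : P.carrier}
    (h : gluePOf P Q u = some a) : u = Sum.inl a := by
  rcases u with x | y
  · simp only [gluePOf, Option.some.injEq] at h; rw [h]
  · simp only [gluePOf] at h
    exact absurd h (by simp)

theorem glueQOf_inl {P Q : PreIpomset σ} (m : Matching P Q) {x : P.carrier} (h : x ∈ P.T) :
    glueQOf P Q m (Sum.inl x) = some (m.g ⟨x, h⟩).val := by
  simp [glueQOf, h]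

theorem glueQOf_inr {P Q : PreIpomset σ} (m : Matching P Q) (y : {y : Q.carrier // y ∉ Q.S}) :
    glueQOf P Q m (Sum.inr y) = some y.val := rfl

theorem absL {P Q : PreIpomset σ} (m : Matching P Q) (hT : P.T = Set.univ)
    (hd : P.Discrete) :
    Iso (glue P Q m) (Q.withIfaces (SddL m) Q.T) := by
  classical
  have mtp : ∀ x : P.carrier, x ∈ P.T := mem_univ_T hT
  set F : (glue P Q m).carrier → Q.carrier :=
    Sum.elim (fun x => (m.g ⟨x, mtp x⟩).val) (fun y => y.val) with hF
  have hQF : ∀ u, glueQOf P Q m u = some (F u) := by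
    rintro (x | y)
    · rw [glueQOf_inl m (mtp x)]; rfl
    · rfl
  have hFq : ∀ u b, glueQOf P Q m u = some b → F u = b := by
    intro u b hb
    rw [hQF u] at hb
    exact Option.some_injective _ hb
  have hFbij : Function.Bijective F := by
    constructor
    · rintro (x | y) (x' | y') h
      · simp only [hF, Sum.elim_inl] at h
        have := m.g.injective (Subtype.ext h)
        rw [Subtype.ext_iff] at this
        exact congrArg Sum.inl this
      · simp only [hF, Sum.elim_inl, Sum.elim_inr] at h
        exact absurd (h ▸ (m.g ⟨x, mtp x⟩).property) y'.property
      · simp only [hF, Sum.elim_inl, Sum.elim_inr] at h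
        exact absurd (h.symm ▸ (m.g ⟨x', mtp x'⟩).property) y.property
      · simp only [hF, Sum.elim_inr] at h
        exact congrArg Sum.inr (Subtype.ext h)
    · intro y
      by_cases hy : y ∈ Q.S
      · refine ⟨Sum.inl (m.g.symm ⟨y, hy⟩).val, ?_⟩
        simp only [hF, Sum.elim_inl]
        have : (⟨(m.g.symm ⟨y, hy⟩).val, mtp _⟩ : {x // x ∈ P.T}) = m.g.symm ⟨y, hy⟩ :=
          Subtype.ext rfl
        rw [this, Equiv.apply_symm_apply]
      · exact ⟨Sum.inr ⟨y, hy⟩, rfl⟩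
  have hgval : ∀ (x : P.carrier) (h : (m.g ⟨x, mtp x⟩).val ∈ Q.S),
      m.g.symm ⟨(m.g ⟨x, mtp x⟩).val, h⟩ = ⟨x, mtp x⟩ := by
    intro x h
    have : (⟨(m.g ⟨x, mtp x⟩).val, h⟩ : {y // y ∈ Q.S}) = m.g ⟨x, mtp x⟩ := Subtype.ext rfl
    rw [this, Equiv.symm_apply_apply]
  refine ⟨Equiv.ofBijective F hFbij, fun u v => ?_, fun u v => ?_, fun u => ?_,
    fun u => ?_, fun u => ?_⟩
  · -- lt
    show (glue P Q m).lt u v ↔ Q.lt (F u) (F v)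
    constructor
    · rintro (⟨a, a', _, _, hlt⟩ | ⟨b, b', hb, hb', hlt⟩ | ⟨⟨a, ha, hanT⟩, _⟩)
      · exact absurd hlt (hd a a')
      · rw [hFq u b hb, hFq v b' hb']; exact hlt
      · have := gluePOf_eq_some ha
        exact absurd (mtp a) hanT
    · intro hlt
      exact Or.inr (Or.inl ⟨F u, F v, hQF u, hQF v, hlt⟩)
  · -- evord
    show (glue P Q m).evord u v ↔ Q.evord (F u) (F v)
    constructor
    · rintro (⟨a, a', ha, ha', hev⟩ | ⟨b, b', hb, hb', hev⟩)
      · rw [gluePOf_eq_some ha, gluePOf_eq_some ha']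
        exact (m.evord_iff ⟨a, mtp a⟩ ⟨a', mtp a'⟩).mp hev
      · rw [hFq u b hb, hFq v b' hb']; exact hev
    · intro hev
      rcases u with x | y <;> rcases v with x' | y'
      · exact Or.inl ⟨x, x', rfl, rfl, (m.evord_iff ⟨x, mtp x⟩ ⟨x', mtp x'⟩).mpr hev⟩
      all_goals exact Or.inr ⟨F _, F _, hQF _, hQF _, hev⟩
  · -- S
    show u ∈ (glue P Q m).S ↔ F u ∈ SddL m
    constructor
    · rintro ⟨a, ha, haS⟩
      rw [gluePOf_eq_some ha]
      refine ⟨(m.g ⟨a, mtp a⟩).property, ?_⟩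
      show ((m.g.symm ⟨(m.g ⟨a, mtp a⟩).val, (m.g ⟨a, mtp a⟩).property⟩)).val ∈ P.S
      rw [hgval a]; exact haS
    · rintro ⟨h, hs⟩
      rcases u with x | y
      · have h' : (m.g ⟨x, mtp x⟩).val ∈ Q.S := h
        have hs' : ((m.g.symm ⟨(m.g ⟨x, mtp x⟩).val, h'⟩)).val ∈ P.S := hs
        rw [hgval x h'] at hs'
        exact ⟨x, rfl, hs'⟩
      · exact absurd h y.property
  · -- T
    show u ∈ (glue P Q m).T ↔ F u ∈ Q.T
    constructor
    · rintro ⟨b, hb, hbT⟩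
      rw [hFq u b hb]; exact hbT
    · intro h; exact ⟨F u, hQF u, h⟩
  · -- lab
    show Q.lab (F u) = (glue P Q m).lab u
    rcases u with x | y
    · exact m.lab_eq ⟨x, mtp x⟩
    · rfl

def SrcMin (P : PreIpomset σ) : Prop := ∀ x ∈ P.S, ∀ y, ¬ P.lt y x
def TgtMax (P : PreIpomset σ) : Prop := ∀ x ∈ P.T, ∀ y, ¬ P.lt x y

-- sanity defeq checks
example (Q : PreIpomset σ) (Sd Td : Set Q.carrier) :
    (Q.withIfaces Sd Td).srcIface = Q.restrict Sd := rfl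
example (Q : PreIpomset σ) (Sd Td : Set Q.carrier) :
    (Q.withIfaces Sd Td).tgtIface = Q.restrict Td := rfl
example (Q : PreIpomset σ) : Q.idOf.srcIface = Q.restrict Set.univ := rfl

theorem srcMin_glue {P Q : PreIpomset σ} (m : Matching P Q) (hP : SrcMin P)
    (hQ : SrcMin Q) : SrcMin (glue P Q m) := by
  rintro u ⟨a, ha, haS⟩ v hlt
  rcases hlt with ⟨b, b', hb, hb', hlt⟩ | ⟨c, c', hc, hc', hlt⟩ | ⟨_, ⟨y, hy, hyS⟩⟩
  · rw [gluePOf_eq_some ha] at hb'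
    rw [gluePOf_inl] at hb'
    cases hb'
    exact hP _ haS b hlt
  · rw [gluePOf_eq_some ha] at hc'
    rcases Option.dite_none_right_eq_some.mp hc' with ⟨hmem, hc''⟩
    cases hc''
    exact hQ _ (m.g ⟨a, hmem⟩).property c hlt
  · rw [gluePOf_eq_some ha] at hy
    rcases Option.dite_none_right_eq_some.mp hy with ⟨hmem, hy'⟩
    cases hy'
    exact hyS (m.g ⟨a, hmem⟩).property

theorem tgtMax_glue {P Q : PreIpomset σ} (m : Matching P Q) (hP : TgtMax P)
    (hQ : TgtMax Q) : TgtMax (glue P Q m) := by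
  rintro u ⟨b, hb, hbT⟩ v hlt
  rcases hlt with ⟨a, a', ha, ha', hlt⟩ | ⟨c, c', hc, hc', hlt⟩ | ⟨⟨a, ha, hanT⟩, _⟩
  · rcases u with x | y
    · rw [gluePOf_inl] at ha
      cases ha
      rcases Option.dite_none_right_eq_some.mp hb with ⟨hmem, _⟩
      exact hP _ hmem a' hlt
    · simp only [gluePOf] at ha
      exact absurd ha (by simp)
  · rw [hb] at hc
    cases hc
    exact hQ _ hbT c' hlt
  · rcases u with x | y
    · rw [gluePOf_inl] at ha
      cases ha
      rcases Option.dite_none_right_eq_some.mp hb with ⟨hmem, _⟩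
      exact hanT hmem
    · simp only [gluePOf] at ha
      exact absurd ha (by simp)

theorem srcIface_glue {P Q : PreIpomset σ} (m : Matching P Q) (hQ : SrcMin Q) :
    Iso P.srcIface ((glue P Q m).srcIface) := by
  classical
  set G : {x : P.carrier // x ∈ P.S} → {u : (glue P Q m).carrier // u ∈ (glue P Q m).S} :=
    fun x => ⟨Sum.inl x.val, ⟨x.val, rfl, x.property⟩⟩ with hG
  have hGbij : Function.Bijective G := by
    constructor
    · intro x x' h
      simp only [hG, Subtype.mk.injEq] at h
      exact Subtype.ext (Sum.inl_injective (congrArg Subtype.val h))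
    · rintro ⟨u, a, ha, haS⟩
      refine ⟨⟨a, haS⟩, ?_⟩
      simp only [hG]
      exact Subtype.ext (gluePOf_eq_some ha).symm
  refine ⟨Equiv.ofBijective G hGbij, fun x x' => ?_, fun x x' => ?_, fun x => Iff.rfl,
    fun x => Iff.rfl, fun x => rfl⟩
  · -- lt
    show P.lt x.val x'.val ↔ (glue P Q m).lt (Sum.inl x.val) (Sum.inl x'.val)
    constructor
    · intro h
      exact Or.inl ⟨x.val, x'.val, rfl, rfl, h⟩
    · rintro (⟨a, a', ha, ha', hlt⟩ | ⟨c, c', hc, hc', hlt⟩ | ⟨_, ⟨y, hy, hyS⟩⟩)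
      · rw [gluePOf_inl, Option.some.injEq] at ha ha'
        rw [← ha, ← ha'] at hlt; exact hlt
      · rcases Option.dite_none_right_eq_some.mp hc' with ⟨hmem, hc''⟩
        cases hc''
        exact absurd hlt (fun hlt => hQ _ (m.g ⟨x'.val, hmem⟩).property c hlt)
      · rcases Option.dite_none_right_eq_some.mp hy with ⟨hmem, hy'⟩
        cases hy'
        exact absurd (m.g ⟨x'.val, hmem⟩).property hyS
  · -- evord
    show P.evord x.val x'.val ↔ (glue P Q m).evord (Sum.inl x.val) (Sum.inl x'.val)
    constructor
    · intro h; exact Or.inl ⟨x.val, x'.val, rfl, rfl, h⟩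
    · rintro (⟨a, a', ha, ha', hev⟩ | ⟨c, c', hc, hc', hev⟩)
      · rw [gluePOf_inl, Option.some.injEq] at ha ha'
        rw [← ha, ← ha'] at hev; exact hev
      · rcases Option.dite_none_right_eq_some.mp hc with ⟨hm1, hc1⟩
        rcases Option.dite_none_right_eq_some.mp hc' with ⟨hm2, hc2⟩
        cases hc1; cases hc2
        exact (m.evord_iff ⟨x.val, hm1⟩ ⟨x'.val, hm2⟩).mpr hev

theorem tgtIface_glue {P Q : PreIpomset σ} (m : Matching P Q) (hP : TgtMax P) :
    Iso Q.tgtIface ((glue P Q m).tgtIface) := by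
  classical
  set G : {y : Q.carrier // y ∈ Q.T} → {u : (glue P Q m).carrier // u ∈ (glue P Q m).T} :=
    fun y => if h : y.val ∈ Q.S
      then ⟨Sum.inl (m.g.symm ⟨y.val, h⟩).val, ⟨y.val, by
        rw [glueQOf_inl m (m.g.symm ⟨y.val, h⟩).property]
        simp, y.property⟩⟩
      else ⟨Sum.inr ⟨y.val, h⟩, ⟨y.val, rfl, y.property⟩⟩ with hG
  have hGval : ∀ y, glueQOf P Q m (G y).val = some y.val := by
    intro y
    simp only [hG]
    split
    · next h =>
      rw [glueQOf_inl m (m.g.symm ⟨y.val, h⟩).property]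
      simp
    · rfl
  have hGbij : Function.Bijective G := by
    constructor
    · intro y y' h
      have := congrArg (fun u => glueQOf P Q m u.val) h
      simp only [hGval] at this
      exact Subtype.ext (Option.some_injective _ this)
    · rintro ⟨u, b, hb, hbT⟩
      refine ⟨⟨b, hbT⟩, ?_⟩
      apply Subtype.ext
      rcases u with x | y
      · rcases Option.dite_none_right_eq_some.mp hb with ⟨hmem, hb'⟩
        simp only [Option.some.injEq] at hb'
        have hbS : b ∈ Q.S := hb' ▸ (m.g ⟨x, hmem⟩).property
        simp only [hG]
        rw [dif_pos hbS]
        have heq : (⟨b, hbS⟩ : {y // y ∈ Q.S}) = m.g ⟨x, hmem⟩ := Subtype.ext hb'.symm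
        show Sum.inl (m.g.symm ⟨b, hbS⟩).val = Sum.inl x
        rw [heq, Equiv.symm_apply_apply]
      · simp only [glueQOf, Option.some.injEq] at hb
        have hbS : b ∉ Q.S := hb ▸ y.property
        simp only [hG]
        rw [dif_neg hbS]
        simp [← hb]; rfl
  have key_lt : ∀ (y y' : {y : Q.carrier // y ∈ Q.T}),
      (glue P Q m).lt (G y).val (G y').val ↔ Q.lt y.val y'.val := by
    intro y y'
    constructor
    · rintro (⟨a, a', ha, ha', hlt⟩ | ⟨c, c', hc, hc', hlt⟩ | ⟨⟨a, ha, hanT⟩, _⟩)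
      · -- both inl, a ∈ P.T gives contradiction with TgtMax P
        exfalso
        have h1 := gluePOf_eq_some ha
        have h2 := hGval y
        rw [h1] at h2
        rcases Option.dite_none_right_eq_some.mp h2 with ⟨hmem, _⟩
        exact hP a hmem a' hlt
      · rw [hGval y, Option.some.injEq] at hc
        rw [hGval y', Option.some.injEq] at hc'
        rw [← hc, ← hc'] at hlt; exact hlt
      · exfalso
        have h1 := gluePOf_eq_some ha
        have h2 := hGval y
        rw [h1] at h2
        rcases Option.dite_none_right_eq_some.mp h2 with ⟨hmem, _⟩
        exact hanT hmem
    · intro h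
      exact Or.inr (Or.inl ⟨y.val, y'.val, hGval y, hGval y', h⟩)
  have key_ev : ∀ (y y' : {y : Q.carrier // y ∈ Q.T}),
      (glue P Q m).evord (G y).val (G y').val ↔ Q.evord y.val y'.val := by
    intro y y'
    constructor
    · rintro (⟨a, a', ha, ha', hev⟩ | ⟨c, c', hc, hc', hev⟩)
      · have h1 := hGval y
        have h2 := hGval y'
        rw [gluePOf_eq_some ha] at h1
        rw [gluePOf_eq_some ha'] at h2
        rcases Option.dite_none_right_eq_some.mp h1 with ⟨hm1, e1⟩
        rcases Option.dite_none_right_eq_some.mp h2 with ⟨hm2, e2⟩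
        simp only [Option.some.injEq] at e1 e2
        rw [← e1, ← e2]
        exact (m.evord_iff ⟨a, hm1⟩ ⟨a', hm2⟩).mp hev
      · rw [hGval y, Option.some.injEq] at hc
        rw [hGval y', Option.some.injEq] at hc'
        rw [← hc, ← hc'] at hev; exact hev
    · intro h
      exact Or.inr ⟨y.val, y'.val, hGval y, hGval y', h⟩
  have key_lab : ∀ (y : {y : Q.carrier // y ∈ Q.T}),
      (glue P Q m).lab (G y).val = Q.lab y.val := by
    intro y
    simp only [hG]
    split
    · next h =>
      show P.lab (m.g.symm ⟨y.val, h⟩).val = Q.lab y.val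
      rw [← m.lab_eq (m.g.symm ⟨y.val, h⟩), Equiv.apply_symm_apply]
    · rfl
  exact ⟨Equiv.ofBijective G hGbij, fun y y' => (key_lt y y').symm,
    fun y y' => (key_ev y y').symm, fun y => Iff.rfl, fun y => Iff.rfl,
    fun y => key_lab y⟩

theorem iso_restrict_SddL {P Q : PreIpomset σ} (m : Matching P Q) (hT : P.T = Set.univ)
    (hdP : P.Discrete) (hdQ : Q.Discrete) :
    Iso (P.restrict P.S) (Q.restrict (SddL m)) := by
  classical
  have mtp : ∀ x : P.carrier, x ∈ P.T := mem_univ_T hT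
  have hgval : ∀ (x : P.carrier) (h : (m.g ⟨x, mtp x⟩).val ∈ Q.S),
      m.g.symm ⟨(m.g ⟨x, mtp x⟩).val, h⟩ = ⟨x, mtp x⟩ := by
    intro x h
    have : (⟨(m.g ⟨x, mtp x⟩).val, h⟩ : {y // y ∈ Q.S}) = m.g ⟨x, mtp x⟩ := Subtype.ext rfl
    rw [this, Equiv.symm_apply_apply]
  set G : {x : P.carrier // x ∈ P.S} → {y : Q.carrier // y ∈ SddL m} :=
    fun x => ⟨(m.g ⟨x.val, mtp x.val⟩).val, ⟨(m.g ⟨x.val, mtp x.val⟩).property, by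
      rw [hgval x.val]; exact x.property⟩⟩ with hG
  have hGbij : Function.Bijective G := by
    constructor
    · intro x x' h
      simp only [hG, Subtype.mk.injEq] at h
      have := m.g.injective (Subtype.ext (Subtype.mk.inj h))
      rw [Subtype.ext_iff] at this
      exact Subtype.ext this
    · rintro ⟨y, hy⟩
      obtain ⟨h, hs⟩ := hy
      refine ⟨⟨(m.g.symm ⟨y, h⟩).val, hs⟩, ?_⟩
      apply Subtype.ext
      show (m.g ⟨(m.g.symm ⟨y, h⟩).val, mtp _⟩).val = y
      have : (⟨(m.g.symm ⟨y, h⟩).val, mtp _⟩ : {x // x ∈ P.T}) = m.g.symm ⟨y, h⟩ :=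
        Subtype.ext rfl
      rw [this, Equiv.apply_symm_apply]
  refine ⟨Equiv.ofBijective G hGbij, fun x x' => ?_, fun x x' => ?_, fun x => Iff.rfl,
    fun x => Iff.rfl, fun x => ?_⟩
  · exact iff_of_false (hdP _ _) (hdQ _ _)
  · exact m.evord_iff ⟨x.val, mtp x.val⟩ ⟨x'.val, mtp x'.val⟩
  · exact m.lab_eq ⟨x.val, mtp x.val⟩

theorem iso_restrict_TddR {P Q : PreIpomset σ} (m : Matching P Q) (hS : Q.S = Set.univ)
    (hdP : P.Discrete) (hdQ : Q.Discrete) :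
    Iso (P.restrict (TddR m)) (Q.restrict Q.T) := by
  classical
  set G : {x : P.carrier // x ∈ TddR m} → {y : Q.carrier // y ∈ Q.T} :=
    fun x => ⟨(m.g ⟨x.val, x.property.choose⟩).val, x.property.choose_spec⟩ with hG
  have hGbij : Function.Bijective G := by
    constructor
    · intro x x' h
      simp only [hG, Subtype.mk.injEq] at h
      have := m.g.injective (Subtype.ext h)
      rw [Subtype.ext_iff] at this
      exact Subtype.ext this
    · rintro ⟨y, hy⟩
      have hyS : y ∈ Q.S := hS.symm ▸ Set.mem_univ y
      have hmem : (m.g.symm ⟨y, hyS⟩).val ∈ TddR m := by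
        refine ⟨(m.g.symm ⟨y, hyS⟩).property, ?_⟩
        have : (⟨(m.g.symm ⟨y, hyS⟩).val, (m.g.symm ⟨y, hyS⟩).property⟩ : {x // x ∈ P.T}) =
            m.g.symm ⟨y, hyS⟩ := Subtype.ext rfl
        rw [this, Equiv.apply_symm_apply]
        exact hy
      refine ⟨⟨(m.g.symm ⟨y, hyS⟩).val, hmem⟩, ?_⟩
      apply Subtype.ext
      show (m.g ⟨(m.g.symm ⟨y, hyS⟩).val, _⟩).val = y
      have : (⟨(m.g.symm ⟨y, hyS⟩).val, hmem.choose⟩ : {x // x ∈ P.T}) = m.g.symm ⟨y, hyS⟩ :=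
        Subtype.ext rfl
      rw [this, Equiv.apply_symm_apply]
  refine ⟨Equiv.ofBijective G hGbij, fun x x' => ?_, fun x x' => ?_, fun x => Iff.rfl,
    fun x => Iff.rfl, fun x => ?_⟩
  · exact iff_of_false (hdP _ _) (hdQ _ _)
  · exact m.evord_iff ⟨x.val, x.property.choose⟩ ⟨x'.val, x'.property.choose⟩
  · exact m.lab_eq ⟨x.val, x.property.choose⟩

theorem SddL_univ {P Q : PreIpomset σ} (m : Matching P Q) (hT : P.T = Set.univ)
    (h : SddL m = Set.univ) : P.S = Set.univ := by
  have mtp : ∀ x : P.carrier, x ∈ P.T := mem_univ_T hT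
  rw [Set.eq_univ_iff_forall]
  intro a
  have hy : (m.g ⟨a, mtp a⟩).val ∈ SddL m := h.symm ▸ Set.mem_univ _
  obtain ⟨h', hs⟩ := hy
  have heq : (⟨(m.g ⟨a, mtp a⟩).val, h'⟩ : {y // y ∈ Q.S}) = m.g ⟨a, mtp a⟩ := Subtype.ext rfl
  rw [heq, Equiv.symm_apply_apply] at hs
  exact hs

theorem SddL_of_S_univ {P Q : PreIpomset σ} (m : Matching P Q) (hS : P.S = Set.univ) :
    SddL m = Q.S := by
  ext y
  constructor
  · rintro ⟨h, -⟩; exact h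
  · intro h; exact ⟨h, hS.symm ▸ Set.mem_univ _⟩

theorem TddR_univ {P Q : PreIpomset σ} (m : Matching P Q) (h : TddR m = Set.univ) :
    P.T = Set.univ := by
  rw [Set.eq_univ_iff_forall]
  intro a
  have : a ∈ TddR m := h.symm ▸ Set.mem_univ a
  exact this.choose

theorem iso_restrict_univ {X : PreIpomset σ} (hS : X.S = ∅) (hT : X.T = ∅) :
    Iso (X.restrict Set.univ) X := by
  refine ⟨Equiv.Set.univ X.carrier, fun x x' => Iff.rfl, fun x x' => Iff.rfl,
    fun x => ?_, fun x => ?_, fun x => rfl⟩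
  · rw [hS]; exact Iff.rfl
  · rw [hT]; exact Iff.rfl

theorem matching_nonempty {P Q X : PreIpomset σ} (h1 : Iso P.tgtIface X)
    (h2 : Iso Q.srcIface X) : Nonempty (Matching P Q) := by
  obtain ⟨f, _, f2, _, _, f5⟩ := h1
  obtain ⟨g, _, g2, _, _, g5⟩ := h2
  refine ⟨⟨f.trans g.symm, fun x y => ?_, fun x => ?_⟩⟩
  · have e1 := f2 x y
    have e2 := g2 (g.symm (f x)) (g.symm (f y))
    simp only [Equiv.apply_symm_apply] at e2
    exact e1.trans e2.symm
  · have e1 := g5 (g.symm (f x))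
    rw [Equiv.apply_symm_apply] at e1
    have e2 := f5 x
    exact e1.symm.trans e2

theorem cong2 {P Q Q' : PreIpomset σ} (hP : P.IsIpomset) (hiso : Iso Q Q')
    (m₁ : Matching P Q) (m₂ : Matching P Q') :
    Iso (glue P Q m₁) (glue P Q' m₂) := by
  classical
  obtain ⟨f, f1, f2, f3, f4, f5⟩ := hiso
  haveI : Finite P.carrier := P.fin
  have htot : ∀ x y : {a // a ∈ P.T}, x ≠ y →
      P.evord x.val y.val ∨ P.evord y.val x.val := by
    intro x y hne
    have hvne : x.val ≠ y.val := fun h => hne (Subtype.ext h)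
    rcases hP.total x.val y.val hvne with h | h | h | h
    · exact absurd h (hP.tgt_max x.val x.property y.val)
    · exact absurd h (hP.tgt_max y.val y.property x.val)
    · exact Or.inl h
    · exact Or.inr h
  have hacy : ∀ x : {a // a ∈ P.T},
      ¬ Relation.TransGen (fun a b : {a // a ∈ P.T} => P.evord a.val b.val) x x := by
    intro x hx
    exact hP.evord_acyclic x.val (Relation.TransGen.lift Subtype.val (fun _ _ h => h) _ _ hx)
  have hgeq : m₁.g.trans (f.subtypeEquiv f3) = m₂.g := by
    apply equiv_unique_of_rel (fun a b : {a // a ∈ P.T} => P.evord a.val b.val)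
      (fun a b : {y // y ∈ Q'.S} => Q'.evord a.val b.val) hacy
      (fun x y h => htot x y h)
    · intro x y
      have e1 := m₁.evord_iff x y
      have e2 := f2 (m₁.g x).val (m₁.g y).val
      exact e1.trans e2
    · exact m₂.evord_iff
  have key : ∀ x : {a // a ∈ P.T}, (m₂.g x).val = f (m₁.g x).val := by
    intro x
    rw [← hgeq]
    rfl
  set F : (glue P Q m₁).carrier → (glue P Q' m₂).carrier :=
    fun u => match u with
      | Sum.inl x => Sum.inl x
      | Sum.inr y => Sum.inr ⟨f y.val, fun hc => y.property ((f3 y.val).mpr hc)⟩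
    with hF
  have hFbij : Function.Bijective F := by
    constructor
    · rintro (x | y) (x' | y') h
      · injection h with h
        rw [h]
      · exact absurd h (by simp [hF])
      · exact absurd h (by simp [hF])
      · injection h with h
        rw [Subtype.ext_iff] at h
        exact congrArg Sum.inr (Subtype.ext (f.injective h))
    · rintro (x' | y')
      · exact ⟨Sum.inl x', rfl⟩
      · refine ⟨Sum.inr ⟨f.symm y'.val, fun hc => y'.property ?_⟩, ?_⟩
        · have := (f3 (f.symm y'.val)).mp hc
          rwa [Equiv.apply_symm_apply] at this
        · exact congrArg Sum.inr (Subtype.ext (f.apply_symm_apply y'.val))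
  have hPc : ∀ u (a : P.carrier), gluePOf P Q u = some a ↔ gluePOf P Q' (F u) = some a := by
    rintro (x | y) a
    · exact Iff.rfl
    · exact iff_of_false (by simp [gluePOf]) (by simp [hF, gluePOf])

  have hQc : ∀ u (b : Q.carrier), glueQOf P Q m₁ u = some b →
      glueQOf P Q' m₂ (F u) = some (f b) := by
    rintro (x | y) b hb
    · rcases Option.dite_none_right_eq_some.mp hb with ⟨hmem, hb'⟩
      simp only [Option.some.injEq] at hb'
      show glueQOf P Q' m₂ (Sum.inl x) = some (f b)
      rw [glueQOf_inl m₂ hmem, key ⟨x, hmem⟩, hb']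
    · simp only [glueQOf, Option.some.injEq] at hb
      show some (f y.val) = some (f b)
      rw [hb]
  have hQc' : ∀ u (c : Q'.carrier), glueQOf P Q' m₂ (F u) = some c →
      ∃ b : Q.carrier, glueQOf P Q m₁ u = some b ∧ c = f b := by
    rintro (x | y) c hc
    · rcases Option.dite_none_right_eq_some.mp hc with ⟨hmem, hc'⟩
      simp only [Option.some.injEq] at hc'
      refine ⟨(m₁.g ⟨x, hmem⟩).val, glueQOf_inl m₁ hmem, ?_⟩
      rw [← hc', key ⟨x, hmem⟩]
    · simp only [hF, glueQOf, Option.some.injEq] at hc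
      exact ⟨y.val, rfl, hc.symm⟩
  refine ⟨Equiv.ofBijective F hFbij, fun u v => ?_, fun u v => ?_, fun u => ?_,
    fun u => ?_, fun u => ?_⟩
  · -- lt
    show (glue P Q m₁).lt u v ↔ (glue P Q' m₂).lt (F u) (F v)
    constructor
    · rintro (⟨a, a', ha, ha', hlt⟩ | ⟨b, b', hb, hb', hlt⟩ | ⟨⟨a, ha, hanT⟩, ⟨y, hy, hyS⟩⟩)
      · exact Or.inl ⟨a, a', (hPc u a).mp ha, (hPc v a').mp ha', hlt⟩
      · exact Or.inr (Or.inl ⟨f b, f b', hQc u b hb, hQc v b' hb', (f1 b b').mp hlt⟩)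
      · exact Or.inr (Or.inr ⟨⟨a, (hPc u a).mp ha, hanT⟩,
          ⟨f y, hQc v y hy, fun hc => hyS ((f3 y).mpr hc)⟩⟩)
    · rintro (⟨a, a', ha, ha', hlt⟩ | ⟨c, c', hc, hc', hlt⟩ | ⟨⟨a, ha, hanT⟩, ⟨y, hy, hyS⟩⟩)
      · exact Or.inl ⟨a, a', (hPc u a).mpr ha, (hPc v a').mpr ha', hlt⟩
      · obtain ⟨b, hb, rfl⟩ := hQc' u c hc
        obtain ⟨b', hb', rfl⟩ := hQc' v c' hc'
        exact Or.inr (Or.inl ⟨b, b', hb, hb', (f1 b b').mpr hlt⟩)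
      · obtain ⟨b, hb, rfl⟩ := hQc' v y hy
        exact Or.inr (Or.inr ⟨⟨a, (hPc u a).mpr ha, hanT⟩,
          ⟨b, hb, fun hc => hyS ((f3 b).mp hc)⟩⟩)
  · -- evord
    show (glue P Q m₁).evord u v ↔ (glue P Q' m₂).evord (F u) (F v)
    constructor
    · rintro (⟨a, a', ha, ha', hev⟩ | ⟨b, b', hb, hb', hev⟩)
      · exact Or.inl ⟨a, a', (hPc u a).mp ha, (hPc v a').mp ha', hev⟩
      · exact Or.inr ⟨f b, f b', hQc u b hb, hQc v b' hb', (f2 b b').mp hev⟩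
    · rintro (⟨a, a', ha, ha', hev⟩ | ⟨c, c', hc, hc', hev⟩)
      · exact Or.inl ⟨a, a', (hPc u a).mpr ha, (hPc v a').mpr ha', hev⟩
      · obtain ⟨b, hb, rfl⟩ := hQc' u c hc
        obtain ⟨b', hb', rfl⟩ := hQc' v c' hc'
        exact Or.inr ⟨b, b', hb, hb', (f2 b b').mpr hev⟩
  · -- S
    show u ∈ (glue P Q m₁).S ↔ F u ∈ (glue P Q' m₂).S
    constructor
    · rintro ⟨a, ha, haS⟩; exact ⟨a, (hPc u a).mp ha, haS⟩
    · rintro ⟨a, ha, haS⟩; exact ⟨a, (hPc u a).mpr ha, haS⟩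
  · -- T
    show u ∈ (glue P Q m₁).T ↔ F u ∈ (glue P Q' m₂).T
    constructor
    · rintro ⟨b, hb, hbT⟩; exact ⟨f b, hQc u b hb, (f4 b).mp hbT⟩
    · rintro ⟨c, hc, hcT⟩
      obtain ⟨b, hb, rfl⟩ := hQc' u c hc
      exact ⟨b, hb, (f4 b).mpr hcT⟩
  · -- lab
    show (glue P Q' m₂).lab (F u) = (glue P Q m₁).lab u
    rcases u with x | y
    · rfl
    · exact f5 y.val

section Assoc
variable {E C' R₂ : PreIpomset σ}

theorem lassoc (m : Matching E C') (hT : E.T = Set.univ) (hdE : E.Discrete)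
    (mR : Matching (C'.withIfaces (SddL m) C'.T) R₂) :
    ∃ (mR' : Matching C' R₂) (m₂ : Matching E (glue C' R₂ mR')),
      Iso (glue (C'.withIfaces (SddL m) C'.T) R₂ mR) (glue E (glue C' R₂ mR') m₂) := by
  classical
  have mtp : ∀ x : E.carrier, x ∈ E.T := mem_univ_T hT
  refine ⟨⟨mR.g, mR.evord_iff, mR.lab_eq⟩, ?_⟩
  set mR' : Matching C' R₂ := ⟨mR.g, mR.evord_iff, mR.lab_eq⟩ with hmR'
  set G := glue C' R₂ mR' with hGdef
  have hmem : ∀ a : {a : E.carrier // a ∈ E.T}, (Sum.inl (m.g a).val : G.carrier) ∈ G.S :=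
    fun a => ⟨(m.g a).val, rfl, (m.g a).property⟩
  set g₂ : {a : E.carrier // a ∈ E.T} → {u : G.carrier // u ∈ G.S} :=
    fun a => ⟨Sum.inl (m.g a).val, hmem a⟩ with hg₂
  have hg₂bij : Function.Bijective g₂ := by
    constructor
    · intro a b h
      simp only [hg₂, Subtype.mk.injEq] at h
      exact m.g.injective (Subtype.ext (Sum.inl_injective (congrArg Subtype.val h)))
    · rintro ⟨u, z, hz, hzS⟩
      refine ⟨m.g.symm ⟨z, hzS⟩, ?_⟩
      apply Subtype.ext
      simp only [hg₂]
      rw [gluePOf_eq_some hz]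
      exact congrArg Sum.inl (congrArg Subtype.val (m.g.apply_symm_apply ⟨z, hzS⟩))
  have hGevord : ∀ (z z' : C'.carrier), G.evord (Sum.inl z) (Sum.inl z') ↔ C'.evord z z' := by
    intro z z'
    constructor
    · rintro (⟨a, a', ha, ha', hev⟩ | ⟨c, c', hc, hc', hev⟩)
      · rw [gluePOf_inl, Option.some.injEq] at ha ha'
        rw [ha, ha']; exact hev
      · rcases Option.dite_none_right_eq_some.mp hc with ⟨h1, e1⟩
        rcases Option.dite_none_right_eq_some.mp hc' with ⟨h2, e2⟩
        simp only [Option.some.injEq] at e1 e2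
        rw [← e1, ← e2] at hev
        exact (mR.evord_iff ⟨z, h1⟩ ⟨z', h2⟩).mpr hev
    · intro h
      exact Or.inl ⟨z, z', rfl, rfl, h⟩
  refine ⟨⟨Equiv.ofBijective g₂ hg₂bij, fun a b => ?_, fun a => ?_⟩, ?_⟩
  · -- evord_iff for m₂
    show E.evord a.val b.val ↔ G.evord (Sum.inl (m.g a).val) (Sum.inl (m.g b).val)
    rw [hGevord]
    exact m.evord_iff a b
  · -- lab_eq for m₂
    show C'.lab (m.g a).val = E.lab a.val
    exact m.lab_eq a
  -- now the iso
  set m₂ : Matching E G := ⟨Equiv.ofBijective g₂ hg₂bij, _, _⟩ with hm₂def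
  have hSet : SddL m₂ = {u : G.carrier | ∃ z, gluePOf C' R₂ u = some z ∧ z ∈ SddL m} := by
    ext u
    constructor
    · rintro ⟨h, hs⟩
      obtain ⟨z, hz, hzS⟩ := id h
      set a := m₂.g.symm ⟨u, h⟩ with ha
      have hga : m₂.g a = ⟨u, h⟩ := m₂.g.apply_symm_apply ⟨u, h⟩
      have hval : (Sum.inl (m.g a).val : G.carrier) = u := congrArg Subtype.val hga
      rw [gluePOf_eq_some hz] at hval
      have hzval : (m.g a).val = z := Sum.inl_injective hval
      refine ⟨z, hz, ?_⟩
      have hzS' : z ∈ C'.S := hzval ▸ (m.g a).property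
      refine ⟨hzS', ?_⟩
      have : (⟨z, hzS'⟩ : {y // y ∈ C'.S}) = m.g a := Subtype.ext hzval.symm
      rw [this, Equiv.symm_apply_apply]
      exact hs
    · rintro ⟨z, hz, hzS, hzs⟩
      rw [gluePOf_eq_some hz]
      set a := m.g.symm ⟨z, hzS⟩ with ha
      have h1 : (Sum.inl z : G.carrier) ∈ G.S := ⟨z, rfl, hzS⟩
      refine ⟨h1, ?_⟩
      have hga : m₂.g a = ⟨Sum.inl z, h1⟩ := by
        apply Subtype.ext
        show (Sum.inl (m.g a).val : G.carrier) = Sum.inl z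
        rw [ha, m.g.apply_symm_apply]
      have : m₂.g.symm ⟨Sum.inl z, h1⟩ = a := by
        rw [← hga, Equiv.symm_apply_apply]
      rw [this]
      exact hzs
  have habs := absL m₂ hT hdE
  have e1 : ∀ u, gluePOf (C'.withIfaces (SddL m) C'.T) R₂ u = gluePOf C' R₂ u := by
    rintro (x | w) <;> rfl
  have e2 : ∀ u, glueQOf (C'.withIfaces (SddL m) C'.T) R₂ mR u = glueQOf C' R₂ mR' u := by
    rintro (x | w) <;> rfl
  have hiso2 : Iso (G.withIfaces (SddL m₂) G.T) (glue (C'.withIfaces (SddL m) C'.T) R₂ mR) := by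
    refine ⟨Equiv.refl _, fun u v => ?_, fun u v => ?_, fun u => ?_, fun u => ?_, fun u => ?_⟩
    · show G.lt u v ↔ (glue (C'.withIfaces (SddL m) C'.T) R₂ mR).lt u v
      rcases u with x | w <;> rcases v with y | w' <;> exact Iff.rfl
    · show G.evord u v ↔ (glue (C'.withIfaces (SddL m) C'.T) R₂ mR).evord u v
      rcases u with x | w <;> rcases v with y | w' <;> exact Iff.rfl
    · show u ∈ SddL m₂ ↔ u ∈ (glue (C'.withIfaces (SddL m) C'.T) R₂ mR).S
      rw [hSet]
      show _ ↔ ∃ z, gluePOf (C'.withIfaces (SddL m) C'.T) R₂ u = some z ∧ z ∈ SddL m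
      rcases u with x | w <;> exact Iff.rfl
    · show u ∈ G.T ↔ u ∈ (glue (C'.withIfaces (SddL m) C'.T) R₂ mR).T
      show _ ↔ ∃ z, glueQOf (C'.withIfaces (SddL m) C'.T) R₂ mR u = some z ∧ z ∈ R₂.T
      rcases u with x | w <;> exact Iff.rfl
    · rfl
  exact (habs.trans hiso2).symm

end Assoc

section RAssoc
variable {E C' R₂ : PreIpomset σ}

theorem rassoc (m : Matching E C') (hS : C'.S = Set.univ) (hdC : C'.Discrete)
    (mR : Matching (E.withIfaces E.S (TddR m)) R₂) :
    ∃ (m₁ : Matching C' R₂) (m₂ : Matching E (glue C' R₂ m₁)),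
      Iso (glue (E.withIfaces E.S (TddR m)) R₂ mR) (glue E (glue C' R₂ m₁) m₂) := by
  classical
  -- the equivalence between TddR m and C'.T
  set e₀ : {a : E.carrier // a ∈ TddR m} → {z : C'.carrier // z ∈ C'.T} :=
    fun a => ⟨(m.g ⟨a.val, a.property.choose⟩).val, a.property.choose_spec⟩ with he₀
  have he₀bij : Function.Bijective e₀ := by
    constructor
    · intro a b h
      simp only [he₀, Subtype.mk.injEq] at h
      have := m.g.injective (Subtype.ext h)
      rw [Subtype.ext_iff] at this
      exact Subtype.ext this
    · rintro ⟨z, hz⟩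
      have hzS : z ∈ C'.S := hS.symm ▸ Set.mem_univ z
      have hmem : (m.g.symm ⟨z, hzS⟩).val ∈ TddR m := by
        refine ⟨(m.g.symm ⟨z, hzS⟩).property, ?_⟩
        have : (⟨(m.g.symm ⟨z, hzS⟩).val, (m.g.symm ⟨z, hzS⟩).property⟩ : {x // x ∈ E.T}) =
            m.g.symm ⟨z, hzS⟩ := Subtype.ext rfl
        rw [this, Equiv.apply_symm_apply]
        exact hz
      refine ⟨⟨(m.g.symm ⟨z, hzS⟩).val, hmem⟩, ?_⟩
      apply Subtype.ext
      show (m.g ⟨(m.g.symm ⟨z, hzS⟩).val, _⟩).val = z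
      have : (⟨(m.g.symm ⟨z, hzS⟩).val, hmem.choose⟩ : {x // x ∈ E.T}) = m.g.symm ⟨z, hzS⟩ :=
        Subtype.ext rfl
      rw [this, Equiv.apply_symm_apply]
  set E₀ : {a : E.carrier // a ∈ TddR m} ≃ {z : C'.carrier // z ∈ C'.T} :=
    Equiv.ofBijective e₀ he₀bij with hE₀
  have hE₀app : ∀ a, E₀ a = e₀ a := fun a => rfl
  -- mR.g viewed with domain TddR m
  set mRg : {a : E.carrier // a ∈ TddR m} ≃ {w : R₂.carrier // w ∈ R₂.S} := mR.g with hmRg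
  -- the matching C' -> R₂
  have hm₁evord : ∀ z z' : {z : C'.carrier // z ∈ C'.T},
      C'.evord z.val z'.val ↔ R₂.evord ((E₀.symm.trans mRg) z).val ((E₀.symm.trans mRg) z').val := by
    intro z z'
    set a := E₀.symm z with ha
    set a' := E₀.symm z' with ha'
    have hz : z = E₀ a := (E₀.apply_symm_apply z).symm
    have hz' : z' = E₀ a' := (E₀.apply_symm_apply z').symm
    have h1 : C'.evord z.val z'.val ↔ E.evord a.val a'.val := by
      rw [hz, hz']
      exact (m.evord_iff ⟨a.val, a.property.choose⟩ ⟨a'.val, a'.property.choose⟩).symm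
    have h2 : E.evord a.val a'.val ↔ R₂.evord (mR.g a).val (mR.g a').val :=
      mR.evord_iff a a'
    exact h1.trans h2
  have hm₁lab : ∀ z : {z : C'.carrier // z ∈ C'.T},
      R₂.lab ((E₀.symm.trans mRg) z).val = C'.lab z.val := by
    intro z
    set a := E₀.symm z with ha
    have hz : z = E₀ a := (E₀.apply_symm_apply z).symm
    have h1 : R₂.lab (mR.g a).val = E.lab a.val := mR.lab_eq a
    have h2 : C'.lab (E₀ a).val = E.lab a.val := m.lab_eq ⟨a.val, a.property.choose⟩
    rw [hz, h2]
    show R₂.lab (mRg (E₀.symm (E₀ a))).val = _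
    rw [Equiv.symm_apply_apply]
    exact h1
  set m₁ : Matching C' R₂ := ⟨E₀.symm.trans mRg, hm₁evord, hm₁lab⟩ with hm₁
  set G := glue C' R₂ m₁ with hG
  -- coherence
  have hcoh : ∀ (a : E.carrier) (h : a ∈ TddR m),
      glueQOf C' R₂ m₁ (Sum.inl (m.g ⟨a, h.choose⟩).val) = some (mR.g ⟨a, h⟩).val := by
    intro a h
    rw [glueQOf_inl m₁ h.choose_spec]
    congr 1
    show (m₁.g ⟨(m.g ⟨a, h.choose⟩).val, h.choose_spec⟩).val = _
    have : (⟨(m.g ⟨a, h.choose⟩).val, h.choose_spec⟩ : {z // z ∈ C'.T}) = E₀ ⟨a, h⟩ := rfl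
    rw [this]
    show (mRg (E₀.symm (E₀ ⟨a, h⟩))).val = _
    rw [Equiv.symm_apply_apply]
    rfl
  have hmRval : ∀ (a : E.carrier) (hE : a ∈ E.T) (hz : (m.g ⟨a, hE⟩).val ∈ C'.T),
      ∃ h : a ∈ TddR m, (m₁.g ⟨(m.g ⟨a, hE⟩).val, hz⟩).val = (mR.g ⟨a, h⟩).val := by
    intro a hE hz
    have h : a ∈ TddR m := ⟨hE, hz⟩
    refine ⟨h, ?_⟩
    have h1 : (⟨(m.g ⟨a, hE⟩).val, hz⟩ : {z // z ∈ C'.T}) = E₀ ⟨a, h⟩ := Subtype.ext rfl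
    rw [h1]
    show (mRg (E₀.symm (E₀ ⟨a, h⟩))).val = _
    rw [Equiv.symm_apply_apply]
    rfl
  have hTddE : ∀ {a : E.carrier}, a ∈ TddR m → a ∈ E.T := fun h => h.choose
  have hTddC : ∀ (a : E.carrier) (hE : a ∈ E.T), (m.g ⟨a, hE⟩).val ∈ C'.T → a ∈ TddR m :=
    fun a hE hz => ⟨hE, hz⟩
  have hTddC' : ∀ (a : E.carrier) (hE : a ∈ E.T), a ∈ TddR m → (m.g ⟨a, hE⟩).val ∈ C'.T :=
    fun a hE h => h.choose_spec
  -- the matching E -> G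
  have hCS : ∀ z : C'.carrier, z ∈ C'.S := fun z => hS.symm ▸ Set.mem_univ z
  have hmem2 : ∀ a : {a : E.carrier // a ∈ E.T}, (Sum.inl (m.g a).val : G.carrier) ∈ G.S :=
    fun a => ⟨(m.g a).val, rfl, hCS _⟩
  set g₂ : {a : E.carrier // a ∈ E.T} → {u : G.carrier // u ∈ G.S} :=
    fun a => ⟨Sum.inl (m.g a).val, hmem2 a⟩ with hg₂
  have hg₂bij : Function.Bijective g₂ := by
    constructor
    · intro a b h
      simp only [hg₂, Subtype.mk.injEq] at h
      exact m.g.injective (Subtype.ext (Sum.inl_injective (congrArg Subtype.val h)))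
    · rintro ⟨u, z, hz, hzS⟩
      refine ⟨m.g.symm ⟨z, hzS⟩, ?_⟩
      apply Subtype.ext
      simp only [hg₂]
      rw [gluePOf_eq_some hz]
      exact congrArg Sum.inl (congrArg Subtype.val (m.g.apply_symm_apply ⟨z, hzS⟩))
  have hGevord : ∀ (z z' : C'.carrier), G.evord (Sum.inl z) (Sum.inl z') ↔ C'.evord z z' := by
    intro z z'
    constructor
    · rintro (⟨a, a', ha, ha', hev⟩ | ⟨c, c', hc, hc', hev⟩)
      · rw [gluePOf_inl, Option.some.injEq] at ha ha'
        rw [ha, ha']; exact hev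
      · rcases Option.dite_none_right_eq_some.mp hc with ⟨h1, e1⟩
        rcases Option.dite_none_right_eq_some.mp hc' with ⟨h2, e2⟩
        simp only [Option.some.injEq] at e1 e2
        rw [← e1, ← e2] at hev
        exact (m₁.evord_iff ⟨z, h1⟩ ⟨z', h2⟩).mpr hev
    · intro h
      exact Or.inl ⟨z, z', rfl, rfl, h⟩
  set m₂ : Matching E G := ⟨Equiv.ofBijective g₂ hg₂bij,
    fun a b => by
      show E.evord a.val b.val ↔ G.evord (Sum.inl (m.g a).val) (Sum.inl (m.g b).val)
      rw [hGevord]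
      exact m.evord_iff a b,
    fun a => by
      show C'.lab (m.g a).val = E.lab a.val
      exact m.lab_eq a⟩ with hm₂
  have hq₂ : ∀ (a : E.carrier) (hE : a ∈ E.T),
      glueQOf E G m₂ (Sum.inl a) = some (Sum.inl (m.g ⟨a, hE⟩).val) := by
    intro a hE
    rw [glueQOf_inl m₂ hE]
    rfl
  refine ⟨m₁, m₂, ?_⟩
  -- elimination helpers for LHS glueQOf
  have fq : ∀ (a : E.carrier) (c : R₂.carrier), glueQOf (E.withIfaces E.S (TddR m)) R₂ mR (Sum.inl a) = some c →
      ∃ h : a ∈ TddR m, c = (mR.g ⟨a, h⟩).val := by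
    intro a c hc
    rcases Option.dite_none_right_eq_some.mp hc with ⟨h, e⟩
    simp only [Option.some.injEq] at e
    exact ⟨h, e.symm⟩
  have fq' : ∀ (a : E.carrier) (h : a ∈ TddR m),
      glueQOf (E.withIfaces E.S (TddR m)) R₂ mR (Sum.inl a) = some ((mR.g ⟨a, h⟩).val) := fun a h =>
    glueQOf_inl mR h
  -- elimination for inner glueQOf of G
  have gq : ∀ (z : C'.carrier) (c : R₂.carrier), glueQOf C' R₂ m₁ (Sum.inl z) = some c →
      ∃ hz : z ∈ C'.T, c = (m₁.g ⟨z, hz⟩).val := by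
    intro z c hc
    rcases Option.dite_none_right_eq_some.mp hc with ⟨h, e⟩
    simp only [Option.some.injEq] at e
    exact ⟨h, e.symm⟩
  -- elimination for outer glueQOf of RHS
  have gq2 : ∀ (a : E.carrier) (c : G.carrier), glueQOf E G m₂ (Sum.inl a) = some c →
      ∃ hE : a ∈ E.T, c = Sum.inl (m.g ⟨a, hE⟩).val := by
    intro a c hc
    rcases Option.dite_none_right_eq_some.mp hc with ⟨h, e⟩
    simp only [Option.some.injEq] at e
    exact ⟨h, e.symm⟩
  -- the equivalence of carriers
  have hnotGS : ∀ w : {w : R₂.carrier // w ∉ R₂.S}, (Sum.inr w : G.carrier) ∉ G.S := by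
    rintro w ⟨z, hz, -⟩
    simp only [gluePOf] at hz
    exact absurd hz (by simp)
  set F : (E.withIfaces E.S (TddR m)).carrier ⊕ {w : R₂.carrier // w ∉ R₂.S} →
      E.carrier ⊕ {u : G.carrier // u ∉ G.S} :=
    fun u => match u with
      | Sum.inl a => Sum.inl a
      | Sum.inr w => Sum.inr ⟨Sum.inr w, hnotGS w⟩ with hF
  have hFbij : Function.Bijective F := by
    constructor
    · rintro (a | w) (b | w') h
      · injection h with h; rw [h]
      · exact absurd h (by simp [hF])
      · exact absurd h (by simp [hF])
      · injection h with h
        rw [Subtype.ext_iff] at h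
        exact congrArg Sum.inr (Sum.inr_injective h)
    · rintro (a | ⟨(z | w), hu⟩)
      · exact ⟨Sum.inl a, rfl⟩
      · exact absurd (⟨z, rfl, hCS z⟩ : (Sum.inl z : G.carrier) ∈ G.S) hu
      · exact ⟨Sum.inr w, congrArg Sum.inr (Subtype.ext rfl)⟩
  refine ⟨Equiv.ofBijective F hFbij, fun u v => ?_, fun u v => ?_, fun u => ?_,
    fun u => ?_, fun u => ?_⟩
  · -- lt
    show (glue (E.withIfaces E.S (TddR m)) R₂ mR).lt u v ↔ (glue E G m₂).lt (F u) (F v)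
    rcases u with a | w <;> rcases v with b | w'
    all_goals simp only [hF]
    · -- inl, inl
      constructor
      · rintro (⟨x, x', hx, hx', hlt⟩ | ⟨c, c', hc, hc', hlt⟩ | ⟨⟨x, hx, hxT⟩, ⟨y, hy, hyS⟩⟩)
        · rw [gluePOf_inl, Option.some.injEq] at hx hx'
          rw [← hx, ← hx'] at hlt
          exact Or.inl ⟨_, _, rfl, rfl, hlt⟩
        · obtain ⟨h, rfl⟩ := fq a c hc
          obtain ⟨h', rfl⟩ := fq b c' hc'
          refine Or.inr (Or.inl ⟨Sum.inl (m.g ⟨a, h.choose⟩).val,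
            Sum.inl (m.g ⟨b, h'.choose⟩).val, hq₂ a h.choose, hq₂ b h'.choose, ?_⟩)
          exact Or.inr (Or.inl ⟨_, _, hcoh a h, hcoh b h', hlt⟩)
        · obtain ⟨h', rfl⟩ := fq b y hy
          exact absurd (mR.g ⟨b, h'⟩).property hyS
      · rintro (⟨x, x', hx, hx', hlt⟩ | ⟨c, c', hc, hc', hGlt⟩ | ⟨⟨x, hx, hxT⟩, ⟨y, hy, hyS⟩⟩)
        · replace hx := Option.some.inj hx; replace hx' := Option.some.inj hx'
          rw [← hx, ← hx'] at hlt
          exact Or.inl ⟨_, _, rfl, rfl, hlt⟩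
        · obtain ⟨hE, rfl⟩ := gq2 a c hc
          obtain ⟨hE', rfl⟩ := gq2 b c' hc'
          rcases hGlt with (⟨z, z', hz, hz', hlt⟩ | ⟨d, d', hd, hd', hlt⟩ |
              ⟨⟨z, hz, hzT⟩, ⟨y, hy, hyS⟩⟩)
          · rw [gluePOf_inl, Option.some.injEq] at hz hz'
            rw [← hz, ← hz'] at hlt
            exact absurd hlt (hdC _ _)
          · obtain ⟨hz, rfl⟩ := gq _ d hd
            obtain ⟨hz', rfl⟩ := gq _ d' hd'
            obtain ⟨h, e⟩ := hmRval a hE hz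
            obtain ⟨h', e'⟩ := hmRval b hE' hz'
            rw [e, e'] at hlt
            exact Or.inr (Or.inl ⟨_, _, fq' a h, fq' b h', hlt⟩)
          · obtain ⟨hz', rfl⟩ := gq _ y hy
            exact absurd (m₁.g ⟨_, hz'⟩).property hyS
        · obtain ⟨hE', rfl⟩ := gq2 b y hy
          exact absurd (hmem2 ⟨b, hE'⟩) hyS
    · -- inl, inr
      constructor
      · rintro (⟨x, x', hx, hx', hlt⟩ | ⟨c, c', hc, hc', hlt⟩ | ⟨⟨x, hx, hxT⟩, ⟨y, hy, hyS⟩⟩)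
        · exact absurd hx' (by simp [gluePOf])
        · obtain ⟨h, rfl⟩ := fq a c hc
          simp only [glueQOf, Option.some.injEq] at hc'
          refine Or.inr (Or.inl ⟨Sum.inl (m.g ⟨a, h.choose⟩).val, Sum.inr w',
            hq₂ a h.choose, rfl, ?_⟩)
          refine Or.inr (Or.inl ⟨_, w'.val, hcoh a h, rfl, ?_⟩)
          rw [← hc'] at hlt; exact hlt
        · rw [gluePOf_inl, Option.some.injEq] at hx
          rw [← hx] at hxT
          by_cases hE : a ∈ E.T
          · refine Or.inr (Or.inl ⟨Sum.inl (m.g ⟨a, hE⟩).val, Sum.inr w',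
              hq₂ a hE, rfl, ?_⟩)
            exact Or.inr (Or.inr ⟨⟨(m.g ⟨a, hE⟩).val, rfl,
              fun hz => hxT (hTddC a hE hz)⟩, ⟨w'.val, rfl, w'.property⟩⟩)
          · exact Or.inr (Or.inr ⟨⟨a, rfl, hE⟩, ⟨Sum.inr w', rfl, hnotGS w'⟩⟩)
      · rintro (⟨x, x', hx, hx', hlt⟩ | ⟨c, c', hc, hc', hGlt⟩ | ⟨⟨x, hx, hxT⟩, ⟨y, hy, hyS⟩⟩)
        · exact absurd hx' (by simp [gluePOf])
        · obtain ⟨hE, rfl⟩ := gq2 a c hc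
          simp only [glueQOf, Option.some.injEq] at hc'
          rcases hGlt with (⟨z, z', hz, hz', hlt⟩ | ⟨d, d', hd, hd', hlt⟩ |
              ⟨⟨z, hz, hzT⟩, ⟨y, hy, hyS⟩⟩)
          · rw [← Option.some.inj hc'] at hz'
            exact absurd hz' (by simp [gluePOf])
          · obtain ⟨hz, rfl⟩ := gq _ d hd
            rw [← Option.some.inj hc'] at hd'
            simp only [glueQOf, Option.some.injEq] at hd'
            obtain ⟨h, e⟩ := hmRval a hE hz
            rw [e] at hlt
            refine Or.inr (Or.inl ⟨_, w'.val, fq' a h, rfl, ?_⟩)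
            rw [← hd'] at hlt; exact hlt
          · rw [gluePOf_inl, Option.some.injEq] at hz
            rw [← hz] at hzT
            refine Or.inr (Or.inr ⟨⟨a, rfl, fun h => hzT (hTddC' a hE h)⟩,
              ⟨w'.val, rfl, w'.property⟩⟩)
        · simp only [gluePOf, Option.some.injEq] at hx
          rw [← Option.some.inj hx] at hxT
          exact Or.inr (Or.inr ⟨⟨a, rfl, fun h => hxT (hTddE h)⟩,
            ⟨w'.val, rfl, w'.property⟩⟩)
    · -- inr, inl
      constructor
      · rintro (⟨x, x', hx, hx', hlt⟩ | ⟨c, c', hc, hc', hlt⟩ | ⟨⟨x, hx, hxT⟩, ⟨y, hy, hyS⟩⟩)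
        · exact absurd hx (by simp [gluePOf])
        · simp only [glueQOf, Option.some.injEq] at hc
          obtain ⟨h', rfl⟩ := fq b c' hc'
          refine Or.inr (Or.inl ⟨Sum.inr w, Sum.inl (m.g ⟨b, h'.choose⟩).val, rfl,
            hq₂ b h'.choose, ?_⟩)
          refine Or.inr (Or.inl ⟨w.val, _, rfl, hcoh b h', ?_⟩)
          rw [← hc] at hlt; exact hlt
        · exact absurd hx (by simp [gluePOf])
      · rintro (⟨x, x', hx, hx', hlt⟩ | ⟨c, c', hc, hc', hGlt⟩ | ⟨⟨x, hx, hxT⟩, ⟨y, hy, hyS⟩⟩)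
        · exact absurd hx (by simp [gluePOf])
        · simp only [glueQOf, Option.some.injEq] at hc
          obtain ⟨hE', rfl⟩ := gq2 b c' hc'
          rcases hGlt with (⟨z, z', hz, hz', hlt⟩ | ⟨d, d', hd, hd', hlt⟩ |
              ⟨⟨z, hz, hzT⟩, ⟨y, hy, hyS⟩⟩)
          · rw [← Option.some.inj hc] at hz
            exact absurd hz (by simp [gluePOf])
          · rw [← Option.some.inj hc] at hd
            simp only [glueQOf, Option.some.injEq] at hd
            obtain ⟨hz', rfl⟩ := gq _ d' hd'
            obtain ⟨h', e'⟩ := hmRval b hE' hz'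
            rw [e'] at hlt
            refine Or.inr (Or.inl ⟨w.val, _, rfl, fq' b h', ?_⟩)
            rw [← hd] at hlt; exact hlt
          · rw [← Option.some.inj hc] at hz
            exact absurd hz (by simp [gluePOf])
        · exact absurd hx (by simp [gluePOf])
    · -- inr, inr
      constructor
      · rintro (⟨x, x', hx, hx', hlt⟩ | ⟨c, c', hc, hc', hlt⟩ | ⟨⟨x, hx, hxT⟩, ⟨y, hy, hyS⟩⟩)
        · exact absurd hx (by simp [gluePOf])
        · simp only [glueQOf, Option.some.injEq] at hc hc'
          refine Or.inr (Or.inl ⟨Sum.inr w, Sum.inr w', rfl, rfl, ?_⟩)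
          refine Or.inr (Or.inl ⟨w.val, w'.val, rfl, rfl, ?_⟩)
          rw [← hc, ← hc'] at hlt; exact hlt
        · exact absurd hx (by simp [gluePOf])
      · rintro (⟨x, x', hx, hx', hlt⟩ | ⟨c, c', hc, hc', hGlt⟩ | ⟨⟨x, hx, hxT⟩, ⟨y, hy, hyS⟩⟩)
        · exact absurd hx (by simp [gluePOf])
        · simp only [glueQOf, Option.some.injEq] at hc hc'
          rcases hGlt with (⟨z, z', hz, hz', hlt⟩ | ⟨d, d', hd, hd', hlt⟩ |
              ⟨⟨z, hz, hzT⟩, ⟨y, hy, hyS⟩⟩)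
          · rw [← Option.some.inj hc] at hz
            exact absurd hz (by simp [gluePOf])
          · rw [← Option.some.inj hc] at hd
            rw [← Option.some.inj hc'] at hd'
            simp only [glueQOf, Option.some.injEq] at hd hd'
            refine Or.inr (Or.inl ⟨w.val, w'.val, rfl, rfl, ?_⟩)
            rw [← hd, ← hd'] at hlt; exact hlt
          · rw [← Option.some.inj hc] at hz
            exact absurd hz (by simp [gluePOf])
        · exact absurd hx (by simp [gluePOf])
  · -- evord
    show (glue (E.withIfaces E.S (TddR m)) R₂ mR).evord u v ↔ (glue E G m₂).evord (F u) (F v)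
    rcases u with a | w <;> rcases v with b | w'
    all_goals simp only [hF]
    · constructor
      · rintro (⟨x, x', hx, hx', hev⟩ | ⟨c, c', hc, hc', hev⟩)
        · rw [gluePOf_inl, Option.some.injEq] at hx hx'
          rw [← hx, ← hx'] at hev
          exact Or.inl ⟨_, _, rfl, rfl, hev⟩
        · obtain ⟨h, rfl⟩ := fq a c hc
          obtain ⟨h', rfl⟩ := fq b c' hc'
          refine Or.inr ⟨Sum.inl (m.g ⟨a, h.choose⟩).val,
            Sum.inl (m.g ⟨b, h'.choose⟩).val, hq₂ a h.choose, hq₂ b h'.choose, ?_⟩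
          exact Or.inr ⟨_, _, hcoh a h, hcoh b h', hev⟩
      · rintro (⟨x, x', hx, hx', hev⟩ | ⟨c, c', hc, hc', hGev⟩)
        · replace hx := Option.some.inj hx; replace hx' := Option.some.inj hx'
          rw [← hx, ← hx'] at hev
          exact Or.inl ⟨_, _, rfl, rfl, hev⟩
        · obtain ⟨hE, rfl⟩ := gq2 a c hc
          obtain ⟨hE', rfl⟩ := gq2 b c' hc'
          have hC : C'.evord (m.g ⟨a, hE⟩).val (m.g ⟨b, hE'⟩).val := (hGevord _ _).mp hGev
          exact Or.inl ⟨a, b, rfl, rfl, (m.evord_iff ⟨a, hE⟩ ⟨b, hE'⟩).mpr hC⟩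
    · constructor
      · rintro (⟨x, x', hx, hx', hev⟩ | ⟨c, c', hc, hc', hev⟩)
        · exact absurd hx' (by simp [gluePOf])
        · obtain ⟨h, rfl⟩ := fq a c hc
          simp only [glueQOf, Option.some.injEq] at hc'
          refine Or.inr ⟨Sum.inl (m.g ⟨a, h.choose⟩).val, Sum.inr w',
            hq₂ a h.choose, rfl, ?_⟩
          refine Or.inr ⟨_, w'.val, hcoh a h, rfl, ?_⟩
          rw [← hc'] at hev; exact hev
      · rintro (⟨x, x', hx, hx', hev⟩ | ⟨c, c', hc, hc', hGev⟩)
        · exact absurd hx' (by simp [gluePOf])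
        · obtain ⟨hE, rfl⟩ := gq2 a c hc
          simp only [glueQOf, Option.some.injEq] at hc'
          rcases hGev with (⟨z, z', hz, hz', hev⟩ | ⟨d, d', hd, hd', hev⟩)
          · rw [← Option.some.inj hc'] at hz'
            exact absurd hz' (by simp [gluePOf])
          · obtain ⟨hz, rfl⟩ := gq _ d hd
            rw [← Option.some.inj hc'] at hd'
            simp only [glueQOf, Option.some.injEq] at hd'
            obtain ⟨h, e⟩ := hmRval a hE hz
            rw [e] at hev
            refine Or.inr ⟨_, w'.val, fq' a h, rfl, ?_⟩
            rw [← hd'] at hev; exact hev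
    · constructor
      · rintro (⟨x, x', hx, hx', hev⟩ | ⟨c, c', hc, hc', hev⟩)
        · exact absurd hx (by simp [gluePOf])
        · simp only [glueQOf, Option.some.injEq] at hc
          obtain ⟨h', rfl⟩ := fq b c' hc'
          refine Or.inr ⟨Sum.inr w, Sum.inl (m.g ⟨b, h'.choose⟩).val, rfl,
            hq₂ b h'.choose, ?_⟩
          refine Or.inr ⟨w.val, _, rfl, hcoh b h', ?_⟩
          rw [← hc] at hev; exact hev
      · rintro (⟨x, x', hx, hx', hev⟩ | ⟨c, c', hc, hc', hGev⟩)
        · exact absurd hx (by simp [gluePOf])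
        · simp only [glueQOf, Option.some.injEq] at hc
          obtain ⟨hE', rfl⟩ := gq2 b c' hc'
          rcases hGev with (⟨z, z', hz, hz', hev⟩ | ⟨d, d', hd, hd', hev⟩)
          · rw [← Option.some.inj hc] at hz
            exact absurd hz (by simp [gluePOf])
          · rw [← Option.some.inj hc] at hd
            simp only [glueQOf, Option.some.injEq] at hd
            obtain ⟨hz', rfl⟩ := gq _ d' hd'
            obtain ⟨h', e'⟩ := hmRval b hE' hz'
            rw [e'] at hev
            refine Or.inr ⟨w.val, _, rfl, fq' b h', ?_⟩
            rw [← hd] at hev; exact hev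
    · constructor
      · rintro (⟨x, x', hx, hx', hev⟩ | ⟨c, c', hc, hc', hev⟩)
        · exact absurd hx (by simp [gluePOf])
        · simp only [glueQOf, Option.some.injEq] at hc hc'
          refine Or.inr ⟨Sum.inr w, Sum.inr w', rfl, rfl, ?_⟩
          refine Or.inr ⟨w.val, w'.val, rfl, rfl, ?_⟩
          rw [← hc, ← hc'] at hev; exact hev
      · rintro (⟨x, x', hx, hx', hev⟩ | ⟨c, c', hc, hc', hGev⟩)
        · exact absurd hx (by simp [gluePOf])
        · simp only [glueQOf, Option.some.injEq] at hc hc'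
          rcases hGev with (⟨z, z', hz, hz', hev⟩ | ⟨d, d', hd, hd', hev⟩)
          · rw [← Option.some.inj hc] at hz
            exact absurd hz (by simp [gluePOf])
          · rw [← Option.some.inj hc] at hd
            rw [← Option.some.inj hc'] at hd'
            simp only [glueQOf, Option.some.injEq] at hd hd'
            refine Or.inr ⟨w.val, w'.val, rfl, rfl, ?_⟩
            rw [← hd, ← hd'] at hev; exact hev
  · -- S
    show u ∈ (glue (E.withIfaces E.S (TddR m)) R₂ mR).S ↔ F u ∈ (glue E G m₂).S
    rcases u with a | w
    all_goals simp only [hF]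
    · constructor
      · rintro ⟨x, hx, hxS⟩
        rw [gluePOf_inl, Option.some.injEq] at hx
        rw [← hx] at hxS
        exact ⟨a, rfl, hxS⟩
      · rintro ⟨x, hx, hxS⟩
        replace hx := Option.some.inj hx
        rw [← hx] at hxS
        exact ⟨a, rfl, hxS⟩
    · constructor
      · rintro ⟨x, hx, -⟩
        exact absurd hx (by simp [gluePOf])
      · rintro ⟨x, hx, -⟩
        exact absurd hx (by simp [gluePOf])
  · -- T
    show u ∈ (glue (E.withIfaces E.S (TddR m)) R₂ mR).T ↔ F u ∈ (glue E G m₂).T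
    rcases u with a | w
    all_goals simp only [hF]
    · constructor
      · rintro ⟨c, hc, hcT⟩
        obtain ⟨h, rfl⟩ := fq a c hc
        exact ⟨Sum.inl (m.g ⟨a, h.choose⟩).val, hq₂ a h.choose,
          ⟨_, hcoh a h, hcT⟩⟩
      · rintro ⟨c, hc, hcT⟩
        obtain ⟨hE, rfl⟩ := gq2 a c hc
        obtain ⟨d, hd, hdT⟩ := hcT
        obtain ⟨hz, rfl⟩ := gq _ d hd
        obtain ⟨h, e⟩ := hmRval a hE hz
        rw [e] at hdT
        exact ⟨_, fq' a h, hdT⟩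
    · constructor
      · rintro ⟨c, hc, hcT⟩
        simp only [glueQOf, Option.some.injEq] at hc
        subst hc
        exact ⟨Sum.inr w, rfl, ⟨w.val, rfl, hcT⟩⟩
      · rintro ⟨c, hc, hcT⟩
        simp only [glueQOf, Option.some.injEq] at hc
        obtain rfl := Option.some.inj hc
        obtain ⟨d, hd, hdT⟩ := hcT
        simp only [glueQOf, Option.some.injEq] at hd
        subst hd
        exact ⟨w.val, rfl, hdT⟩
  · -- lab
    show (glue E G m₂).lab (F u) = (glue (E.withIfaces E.S (TddR m)) R₂ mR).lab u
    rcases u with a | w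
    all_goals simp only [hF]
    · rfl
    · rfl

end RAssoc

end PreIpomset

namespace PAutomaton

open PreIpomset

variable {σ : Type} {A : PAutomaton σ}

/-- Concatenation of paths. -/
def pcomp : ∀ {p q r : A.Q}, Path A p q → Path A q r → Path A p r
  | _, _, _, .nil _, β => β
  | _, _, _, .cons e rest, β => .cons e (pcomp rest β)

theorem pcomp_nil : ∀ {p q : A.Q} (α : Path A p q), pcomp α (Path.nil q) = α := by
  intro p q α
  induction α with
  | nil => rfl
  | cons e rest ih => show Path.cons e (pcomp rest (Path.nil _)) = _; rw [ih]

/-- Length of a path. -/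
def plen : ∀ {p q : A.Q}, Path A p q → ℕ
  | _, _, .nil _ => 0
  | _, _, .cons _ rest => plen rest + 1

/-- The first label starts everything (is a terminator-like label). -/
def hdS : ∀ {p q : A.Q}, Path A p q → Prop
  | _, _, .nil _ => False
  | _, _, .cons e _ => (A.lab e).S = Set.univ

def lastT : ∀ {p q : A.Q}, Path A p q → Prop
  | _, _, .nil _ => False
  | _, _, .cons e rest => (0 < plen rest ∧ lastT rest) ∨ (plen rest = 0 ∧ (A.lab e).T = Set.univ)

theorem lastT_pos : ∀ {p q : A.Q} (α : Path A p q), lastT α → 0 < plen α := by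
  intro p q α h
  cases α with
  | nil => exact absurd h (by simp [lastT])
  | cons e rest => simp [plen]

def Blocky : ∀ {p q : A.Q}, Path A p q → Prop
  | _, _, .nil _ => True
  | _, _, .cons e rest => (0 < plen rest → ((A.lab e).T = Set.univ ∨ hdS rest)) ∧ Blocky rest

theorem blocky_of_plen_zero : ∀ {p q : A.Q} (α : Path A p q), plen α = 0 → Blocky α := by
  intro p q α h
  cases α with
  | nil => trivial
  | cons e rest => exact absurd h (by simp [plen])

/-- Recursive characterization of `Rec`. -/
def RecS : ∀ {p q : A.Q}, Path A p q → PreIpomset σ → Prop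
  | _, _, .nil s, R => Iso (A.mu s).idOf R
  | _, _, .cons e rest, R => ∃ R', RecS rest R' ∧ GlueRel (A.lab e) R' R

theorem recS_of_rec : ∀ {p q : A.Q} {α : Path A p q} {R : PreIpomset σ},
    Rec α R → RecS α R := by
  intro p q α R h
  induction h with
  | nil s R hiso => exact hiso
  | cons e rest h1 h2 ih => exact ⟨_, ih, h2⟩

theorem rec_of_recS : ∀ {p q : A.Q} (α : Path A p q) (R : PreIpomset σ),
    RecS α R → Rec α R := by
  intro p q α
  induction α with
  | nil s => intro R h; exact Rec.nil s R h
  | cons e rest ih =>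
    rintro R ⟨R', h1, h2⟩
    exact Rec.cons e rest (ih _ h1) h2

theorem rec_iff_recS {p q : A.Q} (α : Path A p q) (R : PreIpomset σ) :
    Rec α R ↔ RecS α R :=
  ⟨fun h => recS_of_rec h, fun h => rec_of_recS α R h⟩

theorem recS_iso : ∀ {p q : A.Q} (α : Path A p q) (R R' : PreIpomset σ),
    RecS α R → Iso R R' → RecS α R' := by
  intro p q α
  induction α with
  | nil s => intro R R' h hiso; exact Iso.trans h hiso
  | cons e rest ih =>
    rintro R R' ⟨R₁, h1, h2⟩ hiso
    exact ⟨R₁, h1, h2.iso_right hiso⟩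

theorem recS_func (hA : A.IsPA) : ∀ {p q : A.Q} (α : Path A p q) (R R' : PreIpomset σ),
    RecS α R → RecS α R' → Iso R R' := by
  intro p q α
  induction α with
  | nil s => intro R R' h h'; exact Iso.trans (Iso.symm h) h'
  | cons e rest ih =>
    rintro R R' ⟨R₁, h1, m₁, i₁⟩ ⟨R₁', h1', m₂, i₂⟩
    have hiso := ih _ _ h1 h1'
    have := cong2 (hA.2.2.2.1 e) hiso m₁ m₂
    exact Iso.trans (Iso.symm i₁) (Iso.trans (Iso.symm (Iso.symm this)) i₂)

theorem iso_idOf_srcIface {X : PreIpomset σ} (hS : X.S = ∅) (hT : X.T = ∅) :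
    Iso (X.idOf).srcIface X := by
  refine ⟨Equiv.Set.univ X.carrier, fun x x' => Iff.rfl, fun x x' => Iff.rfl,
    fun x => ?_, fun x => ?_, fun x => rfl⟩
  · rw [hS]; exact Iff.rfl
  · rw [hT]; exact Iff.rfl

theorem iso_idOf_tgtIface {X : PreIpomset σ} (hS : X.S = ∅) (hT : X.T = ∅) :
    Iso (X.idOf).tgtIface X := by
  refine ⟨Equiv.Set.univ X.carrier, fun x x' => Iff.rfl, fun x x' => Iff.rfl,
    fun x => ?_, fun x => ?_, fun x => rfl⟩
  · rw [hS]; exact Iff.rfl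
  · rw [hT]; exact Iff.rfl

theorem recS_exists (hA : A.IsPA) : ∀ {p q : A.Q} (α : Path A p q),
    ∃ R : PreIpomset σ, RecS α R ∧ Iso R.srcIface (A.mu p) ∧ Iso R.tgtIface (A.mu q) ∧
      SrcMin R ∧ TgtMax R := by
  intro p q α
  induction α with
  | nil s =>
    obtain ⟨hip, hd, hS, hT⟩ := hA.2.2.1 s
    refine ⟨(A.mu s).idOf, Iso.rfl, iso_idOf_srcIface hS hT, iso_idOf_tgtIface hS hT,
      fun x _ y h => hd y x h, fun x _ y h => hd x y h⟩
  | cons e rest ih =>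
    obtain ⟨R', hrec, hsrc, htgt, hsm, htm⟩ := ih
    obtain ⟨m⟩ := matching_nonempty (hA.2.2.2.2.2 e) hsrc
    refine ⟨glue (A.lab e) R' m, ⟨R', hrec, m, Iso.rfl⟩, ?_, ?_, ?_, ?_⟩
    · exact Iso.trans (Iso.symm (srcIface_glue m hsm)) (hA.2.2.2.2.1 e)
    · exact Iso.trans (Iso.symm (tgtIface_glue m (hA.2.2.2.1 e).tgt_max)) htgt
    · exact srcMin_glue m (hA.2.2.2.1 e).src_min hsm
    · exact tgtMax_glue m (hA.2.2.2.1 e).tgt_max htm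

end PAutomaton

namespace PAutomaton
open PreIpomset
variable {σ : Type} {A : PAutomaton σ}

theorem split : ∀ {x r : A.Q} (α : Path A x r), 0 < plen α →
    ∃ (y : A.Q) (β : Path A x y) (α₂ : Path A y r),
      α = pcomp β α₂ ∧ 0 < plen β ∧ (hdS β ↔ hdS α) ∧ Blocky β ∧ ¬ hdS α₂ ∧
      (0 < plen α₂ → ¬ lastT β) ∧ plen α₂ < plen α := by
  intro x r α
  induction α with
  | nil s => intro h; exact absurd h (by simp [plen])
  | cons e rest ih =>
    intro _
    by_cases hrest : 0 < plen rest
    · by_cases hext : (A.lab e).T = Set.univ ∨ hdS rest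
      · obtain ⟨y, β', α₂, heq, hβpos, hhd, hBl, hnhd, hcut, hlt⟩ := ih hrest
        refine ⟨y, Path.cons e β', α₂, ?_, by simp [plen], Iff.rfl, ?_, hnhd, ?_, ?_⟩
        · show Path.cons e rest = Path.cons e (pcomp β' α₂)
          rw [← heq]
        · exact ⟨fun _ => Or.imp_right hhd.mpr hext, hBl⟩
        · intro hpos
          have hnl := hcut hpos
          rintro ((⟨-, hl⟩) | ⟨hz, -⟩)
          · exact hnl hl
          · rw [hz] at hβpos; exact absurd hβpos (by simp)
        · calc plen α₂ < plen rest := hlt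
            _ < plen (Path.cons e rest) := by simp [plen]
      · push_neg at hext
        refine ⟨A.tgt e, Path.cons e (Path.nil (A.tgt e)), rest, rfl, by simp [plen],
          Iff.rfl, ⟨fun h => absurd h (by simp [plen]), trivial⟩, hext.2, ?_, by simp [plen]⟩
        intro _
        rintro ((⟨h, -⟩) | ⟨-, hT⟩)
        · exact absurd h (by simp [plen])
        · exact hext.1 hT
    · refine ⟨_, Path.cons e rest, Path.nil _, (pcomp_nil _).symm, by simp [plen], Iff.rfl,
        ⟨fun h => absurd h hrest, blocky_of_plen_zero rest (by omega)⟩,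
        by simp [hdS], ?_, by simp [plen]⟩
      intro h
      exact absurd h (by simp [plen])
end PAutomaton

namespace PAutomaton
open PreIpomset
variable {σ : Type} {A : PAutomaton σ}

/-- Canonical underlying labels for the normalized automaton. -/
def labOf (A : PAutomaton σ) : A.E ⊕ A.Q → PreIpomset σ :=
  Sum.elim A.lab fun q => (A.mu q).idOf

theorem isIpomset_withIfaces {X : PreIpomset σ} (hip : X.IsIpomset) (hd : X.Discrete)
    (S T : Set X.carrier) : (X.withIfaces S T).IsIpomset where
  lt_trans := hip.lt_trans
  lt_irrefl := hip.lt_irrefl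
  evord_acyclic := hip.evord_acyclic
  total := hip.total
  lt_not_evord := hip.lt_not_evord
  src_min := fun x _ y h => hd y x h
  tgt_max := fun x _ y h => hd x y h
  interval := fun w x _ _ h _ => absurd h (hd w x)

theorem labOf_discrete (hA : A.IsPA) (hg : A.IsGST) : ∀ i, (labOf A i).Discrete := by
  rintro (e | q)
  · exact hg e
  · exact fun x y h => (hA.2.2.1 q).2.1 x y h

theorem labOf_ipomset (hA : A.IsPA) (hg : A.IsGST) : ∀ i, (labOf A i).IsIpomset := by
  rintro (e | q)
  · exact hA.2.2.2.1 e
  · exact isIpomset_withIfaces (hA.2.2.1 q).1 (hA.2.2.1 q).2.1 Set.univ Set.univ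

theorem block (hA : A.IsPA) (hg : A.IsGST) (hns : A.NoSilent) :
    ∀ {x y : A.Q} (β : Path A x y), Blocky β →
    ∃ (iF : A.E ⊕ A.Q) (S' T' : Set (labOf A iF).carrier),
      Iso ((labOf A iF).withIfaces S' T').srcIface (A.mu x) ∧
      Iso ((labOf A iF).withIfaces S' T').tgtIface (A.mu y) ∧
      (S' = Set.univ ↔ (hdS β ∨ plen β = 0)) ∧
      (T' = Set.univ → (lastT β ∨ plen β = 0)) ∧
      (∀ (q : A.Q) (α₂ : Path A y q) (R₂ R : PreIpomset σ),
        RecS α₂ R₂ → GlueRel ((labOf A iF).withIfaces S' T') R₂ R →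
          RecS (pcomp β α₂) R) := by
  intro x y β
  induction β with
  | nil s =>
    intro _
    obtain ⟨hip, hd, hSc, hTc⟩ := hA.2.2.1 s
    refine ⟨Sum.inr s, Set.univ, Set.univ, ?_, ?_, by simp [hdS, plen], fun _ => Or.inr rfl, ?_⟩
    · exact iso_idOf_srcIface hSc hTc
    · exact iso_idOf_tgtIface hSc hTc
    · rintro q α₂ R₂ R hrec ⟨mR, isoR⟩
      show RecS α₂ R
      have habs := absL mR (rfl : ((A.mu s).idOf.withIfaces Set.univ Set.univ).T = Set.univ)
        (fun a b h => hd a b h)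
      rw [SddL_of_S_univ mR rfl, withIfaces_self] at habs
      exact recS_iso α₂ R₂ R hrec (Iso.trans (Iso.symm habs) isoR)
  | cons e rest ih =>
    intro hB
    obtain ⟨hb1, hb2⟩ := hB
    obtain ⟨i', S'', T'', hsrc', htgt', hSIFF', hTIMP', W'⟩ := ih hb2
    have hdC' : ((labOf A i').withIfaces S'' T'').Discrete :=
      fun a b h => labOf_discrete hA hg i' a b h
    obtain ⟨m⟩ := matching_nonempty (hA.2.2.2.2.2 e) hsrc'
    by_cases hTe : (A.lab e).T = Set.univ
    · -- absorb to the right: C = C'.withIfaces (SddL m) C'.T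
      refine ⟨i', (SddL m : Set ((A.labOf i').withIfaces S'' T'').carrier), T'', ?_, ?_, ?_, ?_, ?_⟩
      · exact Iso.trans (Iso.symm (iso_restrict_SddL m hTe (hg e) hdC')) (hA.2.2.2.2.1 e)
      · exact htgt'
      · constructor
        · intro h
          exact Or.inl (SddL_univ m hTe h)
        · rintro (h | h)
          · exact absurd ⟨hA.2.2.2.1 e, hg e, h, hTe⟩ (hns e)
          · exact absurd h (by simp [plen])
      · intro h
        rcases hTIMP' h with h' | h'
        · exact Or.inl (Or.inl ⟨lastT_pos rest h', h'⟩)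
        · exact Or.inl (Or.inr ⟨h', hTe⟩)
      · rintro q α₂ R₂ R hrec ⟨mRc, isoR⟩
        obtain ⟨mR', m₂, hiso⟩ := lassoc m hTe (hg e) mRc
        refine ⟨glue ((labOf A i').withIfaces S'' T'') R₂ mR', ?_, m₂, ?_⟩
        · exact W' q α₂ R₂ _ hrec ⟨mR', Iso.rfl⟩
        · exact Iso.trans (Iso.symm hiso) isoR
    · -- absorb to the left: C = (A.lab e).withIfaces S (TddR m)
      have hSC' : S'' = Set.univ := by
        apply hSIFF'.mpr
        by_cases hpos : 0 < plen rest
        · exact Or.inl ((hb1 hpos).resolve_left hTe)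
        · exact Or.inr (by omega)
      have hSC'' : ((labOf A i').withIfaces S'' T'').S = Set.univ := hSC'
      refine ⟨Sum.inl e, (A.lab e).S, TddR m, ?_, ?_, ?_, ?_, ?_⟩
      · exact hA.2.2.2.2.1 e
      · exact Iso.trans (iso_restrict_TddR m hSC'' (hg e) hdC') htgt'
      · constructor
        · intro h; exact Or.inl h
        · rintro (h | h)
          · exact h
          · exact absurd h (by simp [plen])
      · intro h
        exact absurd (TddR_univ m h) hTe
      · rintro q α₂ R₂ R hrec ⟨mRc, isoR⟩
        obtain ⟨m₁, m₂, hiso⟩ := rassoc m hSC'' hdC' mRc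
        refine ⟨glue ((labOf A i').withIfaces S'' T'') R₂ m₁, ?_, m₂, ?_⟩
        · exact W' q α₂ R₂ _ hrec ⟨m₁, Iso.rfl⟩
        · exact Iso.trans (Iso.symm hiso) isoR

end PAutomaton

namespace PAutomaton
open PreIpomset
variable {σ : Type} {A : PAutomaton σ}

def GoodT (A : PAutomaton σ) : Type :=
  ((A.Q × Fin 4) × (A.Q × Fin 4)) ×
    Σ i : A.E ⊕ A.Q, Set (labOf A i).carrier × Set (labOf A i).carrier

def labF (A : PAutomaton σ) (d : GoodT A) : PreIpomset σ :=
  (labOf A d.2.1).withIfaces d.2.2.1 d.2.2.2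

def Good (A : PAutomaton σ) (d : GoodT A) : Prop :=
  (d.1.1.2 = 0 ∨ d.1.1.2 = 1) ∧ (d.1.2.2 = 1 ∨ d.1.2.2 = 2) ∧
  (d.1.1.2 = 0 → d.1.1.1 ∈ A.start) ∧ (d.1.2.2 = 2 → d.1.2.1 ∈ A.accept) ∧
  ((labF A d).S = Set.univ → d.1.1.2 = 0) ∧ ((labF A d).T = Set.univ → d.1.2.2 = 2) ∧
  Iso (labF A d).srcIface (A.mu d.1.1.1) ∧ Iso (labF A d).tgtIface (A.mu d.1.2.1) ∧
  ∃ β : Path A d.1.1.1 d.1.2.1, ∀ (r : A.Q) (α₂ : Path A d.1.2.1 r) (R₂ R : PreIpomset σ),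
    RecS α₂ R₂ → GlueRel (labF A d) R₂ R → RecS (pcomp β α₂) R

def Aprime (A : PAutomaton σ) : PAutomaton σ where
  Q := A.Q × Fin 4
  E := {d : GoodT A // Good A d}
  src := fun d => d.val.1.1
  tgt := fun d => d.val.1.2
  lab := fun d => labF A d.val
  mu := fun w => A.mu w.1
  start := {w | w.1 ∈ A.start ∧ (w.2 = 0 ∨ (w.2 = 3 ∧ w.1 ∈ A.accept))}
  accept := {w | w.1 ∈ A.accept ∧ (w.2 = 2 ∨ (w.2 = 3 ∧ w.1 ∈ A.start))}

theorem bwd : ∀ {w z : (Aprime A).Q} (π : Path (Aprime A) w z) (R : PreIpomset σ),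
    RecS (A := Aprime A) π R → ∃ α : Path A w.1 z.1, RecS (A := A) α R := by
  intro w z π
  induction π with
  | nil s => intro R h; exact ⟨Path.nil s.1, h⟩
  | cons t π₂ ih =>
    rintro R ⟨R₂, h₂, hglue⟩
    obtain ⟨α₂, hα₂⟩ := ih R₂ h₂
    obtain ⟨β, Wt⟩ := t.property.2.2.2.2.2.2.2.2
    exact ⟨pcomp β α₂, Wt _ α₂ R₂ R hα₂ hglue⟩

theorem fwd (hA : A.IsPA) (hg : A.IsGST) (hns : A.NoSilent) :
    ∀ (n : ℕ) {x r : A.Q} (α : Path A x r), plen α ≤ n → 0 < plen α →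
    ∀ R : PreIpomset σ, RecS α R → ∀ i : Fin 4, (i = 0 ∨ i = 1) →
    (i = 0 → x ∈ A.start) → (hdS α → i = 0) → r ∈ A.accept →
    ∃ π : Path (Aprime A) (x, i) (r, (2 : Fin 4)), RecS (A := Aprime A) π R := by
  intro n
  induction n with
  | zero => intro x r α hle hpos; omega
  | succ n IH =>
    intro x r α hle hpos R hrec i hi hi0 hhd hr
    obtain ⟨y, β, α₂, heq, hβpos, hhdiff, hBl, hnhd2, hcut2, hlt⟩ := split α hpos
    obtain ⟨iF, S', T', hsrc, htgt, hSIFF, hTIMP, W⟩ := block hA hg hns β hBl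
    rw [heq] at hrec
    cases α₂ with
    | nil =>
      obtain ⟨hip, hd, hSc, hTc⟩ := hA.2.2.1 r
      obtain ⟨mC⟩ := matching_nonempty htgt (iso_idOf_srcIface hSc hTc)
      have hrec₂ : RecS (A := A) (Path.nil r) ((A.mu r).idOf) := Iso.rfl
      have hstar : RecS (pcomp β (Path.nil r)) (glue ((labOf A iF).withIfaces S' T')
          ((A.mu r).idOf) mC) := W r (Path.nil r) _ _ hrec₂ ⟨mC, Iso.rfl⟩
      have hRR := recS_func hA _ R _ hrec hstar
      have good : Good A (((x, i), (r, 2)), ⟨iF, S', T'⟩) := by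
        refine ⟨hi, Or.inr rfl, hi0, fun _ => hr, ?_, fun _ => rfl, hsrc, htgt, β, W⟩
        intro h
        exact hhd (hhdiff.mp ((hSIFF.mp h).resolve_right (by omega)))
      refine ⟨Path.cons (A := Aprime A)
        (⟨(((x, i), (r, 2)), ⟨iF, S', T'⟩), good⟩ : (Aprime A).E)
        (Path.nil (A := Aprime A) (r, 2)), ?_⟩
      exact ⟨(A.mu r).idOf, Iso.rfl, mC, Iso.symm hRR⟩
    | cons f rest₂ =>
      have hα₂pos : 0 < plen (Path.cons f rest₂) := by simp [plen]
      have hnl := hcut2 hα₂pos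
      obtain ⟨R₂, hrec₂, hsrc₂, htgt₂, hsm₂, htm₂⟩ := recS_exists hA (Path.cons f rest₂)
      obtain ⟨mC⟩ := matching_nonempty htgt hsrc₂
      have hstar := W _ (Path.cons f rest₂) R₂ _ hrec₂ ⟨mC, Iso.rfl⟩
      have hRR := recS_func hA _ R _ hrec hstar
      obtain ⟨π₂, hπ₂⟩ := IH (Path.cons f rest₂) (by omega) hα₂pos R₂ hrec₂ 1
        (Or.inr rfl) (fun h => absurd h (by decide)) (fun h => absurd h hnhd2) hr
      have good : Good A (((x, i), (A.src f, 1)), ⟨iF, S', T'⟩) := by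
        refine ⟨hi, Or.inl rfl, hi0, ?_, ?_, ?_, hsrc, htgt, β, W⟩
        · intro h
          exact absurd (show (1 : Fin 4) = 2 from h) (by decide)
        · intro h
          exact hhd (hhdiff.mp ((hSIFF.mp h).resolve_right (by omega)))
        · intro h
          exfalso
          rcases hTIMP h with h' | h'
          · exact absurd h' hnl
          · omega
      exact ⟨Path.cons (A := Aprime A)
        (⟨(((x, i), (A.src f, 1)), ⟨iF, S', T'⟩), good⟩ : (Aprime A).E) π₂, R₂, hπ₂,
        mC, Iso.symm hRR⟩

end PAutomaton

open PAutomaton PreIpomset in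
theorem gst_conditions_abcd' {σ : Type} [Finite σ] (A : PAutomaton σ)
    (hA : A.IsPA) (hg : A.IsGST) (hns : A.NoSilent) :
    ∃ A' : PAutomaton σ, A'.IsPA ∧ A'.IsGST ∧
      (∀ e, A'.tgt e ∉ A'.start) ∧
      (∀ e, A'.src e ∉ A'.accept) ∧
      (∀ e, (A'.lab e).T = Set.univ → A'.tgt e ∈ A'.accept) ∧
      (∀ e, (A'.lab e).S = Set.univ → A'.src e ∈ A'.start) ∧
      A'.lang = A.lang := by
  classical
  refine ⟨Aprime A, ⟨?_, ?_, fun q => hA.2.2.1 q.1,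
      fun d => isIpomset_withIfaces (labOf_ipomset hA hg _) (labOf_discrete hA hg _) _ _,
      fun d => d.property.2.2.2.2.2.2.1, fun d => d.property.2.2.2.2.2.2.2.1⟩,
    fun d a b h => labOf_discrete hA hg _ a b h, ?_, ?_, ?_, ?_, ?_⟩
  · haveI := hA.1
    exact (inferInstance : Finite (A.Q × Fin 4))
  · haveI := hA.1
    haveI := hA.2.1
    haveI : ∀ i : A.E ⊕ A.Q, Finite (labOf A i).carrier := fun i => (labOf A i).fin
    haveI : Finite (GoodT A) := by unfold GoodT; exact inferInstance
    exact (inferInstance : Finite {d : GoodT A // Good A d})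
  · -- (a)
    rintro e ⟨-, h⟩
    have hj := e.property.2.1
    have h2 : e.val.1.2.2 = 0 ∨ e.val.1.2.2 = 3 ∧ e.val.1.2.1 ∈ A.accept := h
    rcases hj with hj | hj <;> rcases h2 with h2 | ⟨h2, -⟩ <;> rw [hj] at h2 <;>
      exact absurd h2 (by decide)
  · -- (b)
    rintro e ⟨-, h⟩
    have hj := e.property.1
    have h2 : e.val.1.1.2 = 2 ∨ e.val.1.1.2 = 3 ∧ e.val.1.1.1 ∈ A.start := h
    rcases hj with hj | hj <;> rcases h2 with h2 | ⟨h2, -⟩ <;> rw [hj] at h2 <;>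
      exact absurd h2 (by decide)
  · -- (c)
    intro e hT
    have hj := e.property.2.2.2.2.2.1 hT
    exact ⟨e.property.2.2.2.1 hj, Or.inl hj⟩
  · -- (d)
    intro e hS
    have hi := e.property.2.2.2.2.1 hS
    exact ⟨e.property.2.2.1 hi, Or.inl hi⟩
  · -- language
    ext R
    constructor
    · rintro ⟨w, z, π, hw, hz, hrec⟩
      obtain ⟨α, hα⟩ := bwd π R (recS_of_rec hrec)
      exact ⟨w.1, z.1, α, hw.1, hz.1, rec_of_recS _ _ hα⟩
    · rintro ⟨p, r, α, hp, hr, hrec⟩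
      show ∃ (p' r' : (Aprime A).Q) (π : Path (Aprime A) p' r'),
        p' ∈ (Aprime A).start ∧ r' ∈ (Aprime A).accept ∧ Rec π R
      cases α with
      | nil =>
        refine ⟨(p, 3), (p, 3), Path.nil (A := Aprime A) (p, 3), ⟨hp, Or.inr ⟨rfl, hr⟩⟩,
          ⟨hr, Or.inr ⟨rfl, hp⟩⟩, ?_⟩
        exact Rec.nil _ _ (recS_of_rec hrec)
      | cons e rest =>
        obtain ⟨π, hπ⟩ := fwd hA hg hns (plen (Path.cons e rest)) (Path.cons e rest)
          le_rfl (by simp [plen]) R (recS_of_rec hrec) 0 (Or.inl rfl) (fun _ => hp)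
          (fun _ => rfl) hr
        exact ⟨(A.src e, 0), (r, 2), π, ⟨hp, Or.inl rfl⟩, ⟨hr, Or.inl rfl⟩,
          rec_of_recS _ _ hπ⟩


/-- For every gST-automaton without silent transitions there is a
language-equivalent gST-automaton satisfying conditions (a)–(d). -/
theorem gst_conditions_abcd {σ : Type} [Finite σ] (A : PAutomaton σ)
    (hA : A.IsPA) (hg : A.IsGST) (hns : A.NoSilent) :
    ∃ A' : PAutomaton σ, A'.IsPA ∧ A'.IsGST ∧
      (∀ e, A'.tgt e ∉ A'.start) ∧
      (∀ e, A'.src e ∉ A'.accept) ∧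
      (∀ e, (A'.lab e).T = Set.univ → A'.tgt e ∈ A'.accept) ∧
      (∀ e, (A'.lab e).S = Set.univ → A'.src e ∈ A'.start) ∧
      A'.lang = A.lang := by
  exact gst_conditions_abcd' A hA hg hns

end HDA
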